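/- arXiv:2105.12221 — 9 statements merged into one kernel-verified Lean document; each statement's English description precedes it below -/
import Mathlib

section
/- Let L : (ℝ^D)^m → ℝ be a symmetric loss whose gradient ∇L is locally Lipschitz, and let ρ : ℝ_{≥0} → ℝ^{Dm} be a solution of the gradient flow equation ρ'(t) = −∇L(ρ(t)). If ρ(0) does not belong to any symmetry subspace H_{i,j} for i ≠ j ∈ [m], then for every finite time t ≥ 0 and every pair i ≠ j ∈ [m], ρ(t) ∉ H_{i,j}; that is, the gradient flow started outside all symmetry subspaces never visits a symmetry subspace in finite time. -/
/-!
Swapping units `i` and `j` is a linear isometry `P` that preserves `L`, hence commutes with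
`∇L`; so `P ∘ ρ` is again a gradient flow. If `ρ t ∈ H_{i,j}`, i.e. `P (ρ t) = ρ t`, the two
flows agree at time `t`, and uniqueness of solutions of the locally Lipschitz ODE (run backwards
on `[0, t]`) forces `P (ρ 0) = ρ 0`, i.e. `ρ 0 ∈ H_{i,j}`.
-/

/-- The parameter space of `m` units, each a vector in `ℝ^D`, with the
Euclidean (ℓ²) inner-product structure. -/
abbrev Param (m D : ℕ) := PiLp 2 (fun _ : Fin m => EuclideanSpace ℝ (Fin D))

open Set Function
open scoped InnerProductSpace

section ODE

variable {E : Type*} [NormedAddCommGroup E] [NormedSpace ℝ E]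

theorem ODE_solution_eqOn_Icc_of_locallyLipschitz {v : E → E} (hv : LocallyLipschitz v)
    {f g : ℝ → E} {a b : ℝ}
    (hf : ∀ t ∈ Icc a b, HasDerivAt f (v (f t)) t) (hg : ∀ t ∈ Icc a b, HasDerivAt g (v (g t)) t)
    (hb : f b = g b) : EqOn f g (Icc a b) := by
  have hfc : ContinuousOn f (Icc a b) := fun t ht => (hf t ht).continuousAt.continuousWithinAt
  have hgc : ContinuousOn g (Icc a b) := fun t ht => (hg t ht).continuousAt.continuousWithinAt
  set s := f '' Icc a b ∪ g '' Icc a b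
  -- a uniform Lipschitz constant on the compact set swept out by both trajectories
  obtain ⟨K, hK⟩ : ∃ K, LipschitzOnWith K v s :=
    hv.locallyLipschitzOn.exists_lipschitzOnWith_of_compact
      ((isCompact_Icc.image_of_continuousOn hfc).union (isCompact_Icc.image_of_continuousOn hgc))
  exact ODE_solution_unique_of_mem_Icc_left (v := fun _ => v) (s := fun _ => s)
    (fun _ _ => hK) hfc (fun t ht => (hf t (Ioc_subset_Icc_self ht)).hasDerivWithinAt)
    (fun t ht => Or.inl (mem_image_of_mem f (Ioc_subset_Icc_self ht))) hgc
    (fun t ht => (hg t (Ioc_subset_Icc_self ht)).hasDerivWithinAt)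
    (fun t ht => Or.inr (mem_image_of_mem g (Ioc_subset_Icc_self ht))) hb

theorem ODE_solution_isFixedPt_left {v : E → E} (hv : LocallyLipschitz v) (P : E →L[ℝ] E)
    (hvP : ∀ x, v (P x) = P (v x)) {f : ℝ → E} {a b : ℝ}
    (hf : ∀ t ∈ Icc a b, HasDerivAt f (v (f t)) t) (hb : IsFixedPt P (f b)) (hab : a ≤ b) :
    IsFixedPt P (f a) := by
  have hPf : ∀ t ∈ Icc a b, HasDerivAt (P ∘ f) (v ((P ∘ f) t)) t := fun t ht => by
    simpa only [comp_apply, hvP] using P.hasFDerivAt.comp_hasDerivAt t (hf t ht)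
  exact ODE_solution_eqOn_Icc_of_locallyLipschitz hv hPf hf hb ⟨le_rfl, hab⟩

end ODE

theorem gradient_apply_linearIsometryEquiv {E : Type*} [NormedAddCommGroup E]
    [InnerProductSpace ℝ E] [CompleteSpace E] {f : E → ℝ} (P : E ≃ₗᵢ[ℝ] E)
    (hf : ∀ x, f (P x) = f x) (x : E) : gradient f (P x) = P (gradient f x) := by
  -- no differentiability is needed: `fderiv` is `0` at `x` and at `P x` simultaneously
  have hderiv : fderiv ℝ f x = (fderiv ℝ f (P x)).comp (P : E →L[ℝ] E) := by
    conv_lhs => rw [← funext hf]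
    exact P.toContinuousLinearEquiv.comp_right_fderiv
  refine ext_inner_right ℝ fun v => ?_
  calc ⟪gradient f (P x), v⟫_ℝ = fderiv ℝ f (P x) (P (P.symm v)) := by
        rw [P.apply_symm_apply, gradient, InnerProductSpace.toDual_symm_apply]
    _ = ⟪gradient f x, P.symm v⟫_ℝ := by
        rw [gradient, InnerProductSpace.toDual_symm_apply, hderiv]; rfl
    _ = ⟪P (gradient f x), v⟫_ℝ := by rw [← P.inner_map_map, P.apply_symm_apply]

section swap

variable {p : ENNReal} [Fact (1 ≤ p)] {𝕜 : Type*} [NormedField 𝕜] {ι : Type*} [Fintype ι]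
  [DecidableEq ι] {E : Type*} [SeminormedAddCommGroup E] [NormedSpace 𝕜 E]

theorem piLpCongrLeft_swap_apply (i j : ι) (θ : PiLp p fun _ : ι => E) (k : ι) :
    LinearIsometryEquiv.piLpCongrLeft p 𝕜 E (Equiv.swap i j) θ k = θ (Equiv.swap i j k) := by
  simp [Equiv.piCongrLeft'_apply]

theorem isFixedPt_piLpCongrLeft_swap_iff (i j : ι) (θ : PiLp p fun _ : ι => E) :
    IsFixedPt (LinearIsometryEquiv.piLpCongrLeft p 𝕜 E (Equiv.swap i j)) θ ↔ θ i = θ j := by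
  refine ⟨fun h => ?_, fun h => PiLp.ext fun k => ?_⟩
  · simpa [piLpCongrLeft_swap_apply] using (congrArg (· i) h).symm
  · rw [piLpCongrLeft_swap_apply]
    rcases eq_or_ne k i with rfl | hki
    · rw [Equiv.swap_apply_left, h]
    rcases eq_or_ne k j with rfl | hkj
    · rw [Equiv.swap_apply_right, h]
    · rw [Equiv.swap_apply_of_ne_of_ne hki hkj]

end swap

set_option synthInstance.maxHeartbeats 400000
set_option maxHeartbeats 2000000

theorem gradientFlow_avoids_symmetry_subspaces_general
    {m D : ℕ} (L : Param m D → ℝ)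
    (hsym : ∀ (π : Equiv.Perm (Fin m)) (θ : Param m D),
      L (WithLp.toLp 2 (fun i => θ (π i))) = L θ)
    (hLip : LocallyLipschitz (gradient L))
    (ρ : ℝ → Param m D)
    (hflow : ∀ t : ℝ, 0 ≤ t → HasDerivAt ρ (-gradient L (ρ t)) t)
    (h0 : ∀ i j : Fin m, i ≠ j → ρ 0 i ≠ ρ 0 j) :
    ∀ t : ℝ, 0 ≤ t → ∀ i j : Fin m, i ≠ j → ρ t i ≠ ρ t j := by
  intro t ht i j hij hρt
  set P := LinearIsometryEquiv.piLpCongrLeft 2 ℝ (EuclideanSpace ℝ (Fin D)) (Equiv.swap i j)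
  have hLP : ∀ θ, L (P θ) = L θ := fun θ =>
    (congrArg L (PiLp.ext (piLpCongrLeft_swap_apply i j θ))).trans (hsym _ θ)
  have hvP : ∀ θ, -gradient L (P θ) = P (-gradient L θ) := fun θ => by
    rw [gradient_apply_linearIsometryEquiv P hLP, map_neg]
  have hfixed₀ := ODE_solution_isFixedPt_left hLip.neg (P : Param m D →L[ℝ] Param m D) hvP
    (fun s hs => hflow s hs.1) ((isFixedPt_piLpCongrLeft_swap_iff i j _).2 hρt) ht
  exact h0 i j hij ((isFixedPt_piLpCongrLeft_swap_iff i j _).1 hfixed₀)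

/-- Let `L` be a C¹ permutation-symmetric loss on `m` units in `ℝ^D`
whose gradient is locally Lipschitz, and let `ρ` be a solution of the gradient flow
`ρ'(t) = -∇L(ρ(t))` for `t ≥ 0`. If `ρ 0` lies outside every symmetry subspace
`H_{i,j}` (`i ≠ j`), then for every finite time `t ≥ 0` and every pair `i ≠ j`,
`ρ t ∉ H_{i,j}`: the flow never visits a symmetry subspace in finite time. -/
theorem gradientFlow_avoids_symmetry_subspaces
    {m D : ℕ} (L : Param m D → ℝ)
    (hC1 : ContDiff ℝ 1 L)
    (hsym : ∀ (π : Equiv.Perm (Fin m)) (θ : Param m D),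
      L (WithLp.toLp 2 (fun i => θ (π i))) = L θ)
    (hLip : LocallyLipschitz (gradient L))
    (ρ : ℝ → Param m D)
    (hflow : ∀ t : ℝ, 0 ≤ t → HasDerivAt ρ (-gradient L (ρ t)) t)
    (h0 : ∀ i j : Fin m, i ≠ j → ρ 0 i ≠ ρ 0 j) :
    ∀ t : ℝ, 0 ≤ t → ∀ i j : Fin m, i ≠ j → ρ t i ≠ ρ t j :=
  gradientFlow_avoids_symmetry_subspaces_general L hsym hLip ρ hflow h0
end

section
/- For m > r, the expansion manifold Θ_{r→m}(θ^r) of an irreducible r-neuron point θ^r is path-connected: any pair of distinct points θ, θ' ∈ Θ_{r→m}(θ^r) is connected via a finite union of line segments γ : [0,1] → Θ_{r→m}(θ^r), lying entirely inside Θ_{r→m}(θ^r), with γ(0) = θ and γ(1) = θ'. -/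
/-!
Every point of the expansion manifold lies in the convex piece cut out by a fixed grouping of its
neurons. Inside that piece, one segment concentrates the outgoing weight of each group `t` on a
single representative neuron `ρ t` and kills the zero-type groups; the endpoint also lies in the
piece in which only the neurons `ρ t` are grouped, and that piece contains the canonical point of
`ρ` (neuron `ρ t` copies teacher neuron `t`, all other neurons vanish). So it suffices to join the
canonical points of any two injective `ρ, σ : Fin r → Fin m`. Relocating one representative `ρ t`
to an unused neuron `p` costs three segments, through the piece in which `ρ t` and `p` together form
the group of `t`. Since `r < m`, an unused neuron always exists, and such relocations turn any
injective `ρ` into any other `σ`, fixing one more coordinate at a time.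
-/

/-- The expansion manifold `Θ_{r→m}(θ^r)` of an `r`-neuron point `θ^r = (wr, ar)`,
as a subset of the parameter space of `m`-neuron points `(w, a)`.
A point belongs to it iff (for some number `j` of zero-type groups) there is a
grouping map `g : Fin m → Fin r ⊕ Fin j` such that: every group `inl t` is nonempty
(`k_t ≥ 1`); each neuron of group `inl t` carries the incoming weight `wr t` and the
outgoing weights of this group sum to `ar t`; each neuron of a zero-type group `inr t`
carries the (arbitrary) incoming weight `w' t` and the outgoing weights of this group
sum to `0`. This is exactly the union `⋃_{s, π ∈ S_m} P_π Γ_s(θ^r)` of the paper. -/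
def expansionManifold {din dout : ℕ} (r m : ℕ)
    (wr : Fin r → Fin din → ℝ) (ar : Fin r → Fin dout → ℝ) :
    Set ((Fin m → Fin din → ℝ) × (Fin m → Fin dout → ℝ)) :=
  { θ | ∃ (j : ℕ) (w' : Fin j → Fin din → ℝ) (g : Fin m → Fin r ⊕ Fin j),
      (∀ t : Fin r, ∃ i, g i = Sum.inl t) ∧
      (∀ i, θ.1 i = Sum.elim wr w' (g i)) ∧
      (∀ t : Fin r,
        ∑ i ∈ Finset.univ.filter (fun i => g i = Sum.inl t), θ.2 i = ar t) ∧
      (∀ t : Fin j,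
        ∑ i ∈ Finset.univ.filter (fun i => g i = Sum.inr t), θ.2 i = 0) }

open Finset Function Relation

theorem Relation.ReflTransGen.exists_fin_chain {α : Type*} {r : α → α → Prop} {a b : α}
    (h : ReflTransGen r a b) :
    ∃ (n : ℕ) (p : Fin (n + 1) → α), p 0 = a ∧ p (Fin.last n) = b ∧
      ∀ i : Fin n, r (p i.castSucc) (p i.succ) := by
  obtain ⟨p, rfl, rfl⟩ : ∃ p : RelSeries {q : α × α | r q.1 q.2}, p.head = a ∧ p.last = b := by
    induction h with
    | refl => exact ⟨RelSeries.singleton _ a, rfl, rfl⟩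
    | tail _ hbc ih =>
      obtain ⟨p, rfl, rfl⟩ := ih
      exact ⟨p.snoc _ hbc, p.head_snoc _ hbc, p.last_snoc _ hbc⟩
  exact ⟨p.length, p, rfl, rfl, p.step⟩

theorem Function.Injective.sum_extend_zero {ι κ M : Type*} [AddCommMonoid M] {ρ : ι → κ}
    (hρ : Injective ρ) (f : ι → M) (s : Finset κ) :
    ∑ i ∈ s, extend ρ f 0 i = ∑ u ∈ s.preimage ρ hρ.injOn, f u := by
  rw [← sum_preimage ρ s hρ.injOn _ fun i _ hi => extend_apply' (f := ρ) f 0 i hi]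
  simp only [hρ.extend_apply]

section SegmentJoined

variable (𝕜 : Type*) {E : Type*} [Semiring 𝕜] [PartialOrder 𝕜] [AddCommMonoid E] [Module 𝕜 E]

def SegmentJoined (S : Set E) : E → E → Prop :=
  ReflTransGen fun x y => segment 𝕜 x y ⊆ S

variable {𝕜} {S C : Set E} {x y z : E}

theorem SegmentJoined.trans (hxy : SegmentJoined 𝕜 S x y) (hyz : SegmentJoined 𝕜 S y z) :
    SegmentJoined 𝕜 S x z :=
  ReflTransGen.trans hxy hyz

theorem SegmentJoined.symm (h : SegmentJoined 𝕜 S x y) : SegmentJoined 𝕜 S y x := by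
  induction h with
  | refl => exact .refl
  | tail _ hbc ih => exact ih.head ((segment_symm 𝕜 _ _).trans_subset hbc)

theorem Convex.segmentJoined (hC : Convex 𝕜 C) (hCS : C ⊆ S) (hx : x ∈ C) (hy : y ∈ C) :
    SegmentJoined 𝕜 S x y :=
  ReflTransGen.single ((hC.segment_subset hx hy).trans hCS)

end SegmentJoined

theorem Function.Injective.update_of_notMem_range {α β : Type*} [DecidableEq α] {f : α → β}
    (hf : Injective f) {b : β} (hb : b ∉ Set.range f) (a : α) : Injective (update f a b) := by
  intro x y hxy
  by_cases hx : x = a <;> by_cases hy : y = a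
  · exact hx.trans hy.symm
  · subst hx
    rw [update_self, update_of_ne hy] at hxy
    exact (hb ⟨y, hxy.symm⟩).elim
  · subst hy
    rw [update_self, update_of_ne hx] at hxy
    exact (hb ⟨x, hxy⟩).elim
  · rw [update_of_ne hx, update_of_ne hy] at hxy
    exact hf hxy

def UpdateMove {α β : Type*} [DecidableEq α] (f f' : α → β) : Prop :=
  Injective f ∧ ∃ a, ∃ b ∉ Set.range f, f' = update f a b

section UpdateMove

variable {α β : Type*} [Fintype α] [DecidableEq α] [Fintype β] [DecidableEq β]

theorem exists_reflTransGen_updateMove_fixing (hcard : Fintype.card α < Fintype.card β)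
    {f g : α → β} (hf : Injective f) (hg : Injective g) (a : α) :
    ∃ f', ReflTransGen UpdateMove f f' ∧ Injective f' ∧ f' a = g a ∧
      ∀ x, f x = g x → f' x = g x := by
  by_cases hfa : f a = g a
  · exact ⟨f, .refl, hf, hfa, fun _ => id⟩
  have hxa : ∀ x, f x = g x → x ≠ a := by rintro x hx rfl; exact hfa hx
  by_cases hfree : g a ∈ Set.range f
  · obtain ⟨s, hs⟩ := hfree
    have hxs : ∀ x, f x = g x → x ≠ s := by
      rintro x hx rfl
      exact hxa x hx (hg (hx.symm.trans hs))
    obtain ⟨q, hq⟩ : ∃ q, q ∉ Set.range f := by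
      by_contra! h
      exact (Fintype.card_le_of_surjective f h).not_gt hcard
    have hb : g a ∉ Set.range (update f s q) := by
      rintro ⟨x, hx⟩
      by_cases hxs : x = s
      · subst hxs
        rw [update_self] at hx
        exact hq ⟨x, hs.trans hx.symm⟩
      · rw [update_of_ne hxs] at hx
        exact hxs (hf (hx.trans hs.symm))
    refine ⟨update (update f s q) a (g a),
      (ReflTransGen.single ⟨hf, s, q, hq, rfl⟩).tail
        ⟨hf.update_of_notMem_range hq s, a, _, hb, rfl⟩,
      (hf.update_of_notMem_range hq s).update_of_notMem_range hb a, update_self .., fun x hx => ?_⟩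
    rw [update_of_ne (hxa x hx), update_of_ne (hxs x hx), hx]
  · refine ⟨update f a (g a), .single ⟨hf, a, _, hfree, rfl⟩,
      hf.update_of_notMem_range hfree a, update_self .., fun x hx => ?_⟩
    rw [update_of_ne (hxa x hx), hx]

theorem reflTransGen_updateMove (hcard : Fintype.card α < Fintype.card β) {f g : α → β}
    (hf : Injective f) (hg : Injective g) : ReflTransGen UpdateMove f g := by
  induction h : #{x | f x ≠ g x} using Nat.strong_induction_on generalizing f with
  | _ n ih =>
  by_cases hfg : f = g
  · exact hfg ▸ .refl
  obtain ⟨a, ha⟩ := Function.ne_iff.mp hfg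
  obtain ⟨f', hff', hf', hfa', hfix⟩ := exists_reflTransGen_updateMove_fixing hcard hf hg a
  refine hff'.trans (ih _ ?_ hf' rfl)
  rw [← h]
  refine card_lt_card ⟨fun x hx => ?_, fun hsub => ?_⟩
  · simp only [mem_filter, mem_univ, true_and] at hx ⊢
    exact fun hfx => hx (hfix x hfx)
  · simpa [hfa'] using hsub (by simpa using ha : a ∈ _)

end UpdateMove

section Slices

variable {din dout r m j : ℕ} (wr : Fin r → Fin din → ℝ) (ar : Fin r → Fin dout → ℝ)

def groupingSlice (g : Fin m → Fin r ⊕ Fin j) :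
    Set ((Fin m → Fin din → ℝ) × (Fin m → Fin dout → ℝ)) :=
  { θ | ∃ w' : Fin j → Fin din → ℝ,
      (∀ t : Fin r, ∃ i, g i = Sum.inl t) ∧
      (∀ i, θ.1 i = Sum.elim wr w' (g i)) ∧
      (∀ t : Fin r, ∑ i ∈ univ.filter (fun i => g i = Sum.inl t), θ.2 i = ar t) ∧
      (∀ t : Fin j, ∑ i ∈ univ.filter (fun i => g i = Sum.inr t), θ.2 i = 0) }

theorem groupingSlice_subset_expansionManifold (g : Fin m → Fin r ⊕ Fin j) :
    groupingSlice wr ar g ⊆ expansionManifold r m wr ar :=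
  fun _ ⟨w', h⟩ => ⟨j, w', g, h⟩

theorem convex_groupingSlice (g : Fin m → Fin r ⊕ Fin j) :
    Convex ℝ (groupingSlice wr ar g) := by
  rintro x ⟨wx, hsurj, hx1, hx2, hx3⟩ y ⟨wy, -, hy1, hy2, hy3⟩ a b - - hab
  refine ⟨a • wx + b • wy, hsurj, fun i => ?_, fun t => ?_, fun t => ?_⟩
  · rcases h : g i <;> simp [hx1 i, hy1 i, h, ← add_smul, hab]
  · simp [sum_add_distrib, ← smul_sum, hx2 t, hy2 t, ← add_smul, hab]
  · simp [sum_add_distrib, ← smul_sum, hx3 t, hy3 t]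

theorem extend_mem_groupingSlice {g : Fin m → Fin r ⊕ Fin j} {ρ : Fin r → Fin m}
    (hρ : Injective ρ) (hg : ∀ u, g (ρ u) = Sum.inl u) {w : Fin m → Fin din → ℝ}
    {w' : Fin j → Fin din → ℝ} (hw : ∀ i, w i = Sum.elim wr w' (g i)) :
    (w, extend ρ ar 0) ∈ groupingSlice wr ar g := by
  refine ⟨w', fun t => ⟨ρ t, hg t⟩, hw, fun t => ?_, fun t => ?_⟩ <;>
    simp [hρ.sum_extend_zero, Finset.preimage, hg]

noncomputable def repGrouping (ρ : Fin r → Fin m) : Fin m → Fin r ⊕ Fin m :=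
  fun i => (partialInv ρ i).elim (Sum.inr i) Sum.inl

theorem repGrouping_apply {ρ : Fin r → Fin m} (hρ : Injective ρ) (u : Fin r) :
    repGrouping ρ (ρ u) = Sum.inl u := by
  simp [repGrouping, partialInv_left hρ]

variable {wr} in
theorem eq_elim_repGrouping {ρ : Fin r → Fin m} (hρ : Injective ρ) {w : Fin m → Fin din → ℝ}
    (hw : ∀ u, w (ρ u) = wr u) (i : Fin m) : w i = Sum.elim wr w (repGrouping ρ i) := by
  rcases h : partialInv ρ i with _ | u
  · simp [repGrouping, h]
  · obtain rfl := (hρ.isPartialInv u i).mp h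
    simp [repGrouping, h, hw]

noncomputable def canonicalPoint (ρ : Fin r → Fin m) :
    (Fin m → Fin din → ℝ) × (Fin m → Fin dout → ℝ) :=
  (extend ρ wr 0, extend ρ ar 0)

theorem canonicalPoint_mem_groupingSlice {ρ : Fin r → Fin m} (hρ : Injective ρ) :
    canonicalPoint wr ar ρ ∈ groupingSlice wr ar (repGrouping ρ) :=
  extend_mem_groupingSlice wr ar hρ (repGrouping_apply hρ)
    (eq_elim_repGrouping hρ (hρ.extend_apply wr 0))

theorem segmentJoined_of_mem_groupingSlice {g : Fin m → Fin r ⊕ Fin j}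
    {x y : (Fin m → Fin din → ℝ) × (Fin m → Fin dout → ℝ)}
    (hx : x ∈ groupingSlice wr ar g) (hy : y ∈ groupingSlice wr ar g) :
    SegmentJoined ℝ (expansionManifold r m wr ar) x y :=
  (convex_groupingSlice wr ar g).segmentJoined
    (groupingSlice_subset_expansionManifold wr ar g) hx hy

theorem segmentJoined_canonicalPoint_of_mem
    {θ : (Fin m → Fin din → ℝ) × (Fin m → Fin dout → ℝ)} (hθ : θ ∈ expansionManifold r m wr ar) :
    ∃ ρ : Fin r → Fin m, Injective ρ ∧
      SegmentJoined ℝ (expansionManifold r m wr ar) θ (canonicalPoint wr ar ρ) := by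
  obtain ⟨j, w', g, hsurj, hw, hsum⟩ := hθ
  choose ρ hρ using hsurj
  have hρinj : Injective ρ := fun a b hab => Sum.inl_injective ((hρ a).symm.trans (hab ▸ hρ b))
  have hθρ : ∀ u, θ.1 (ρ u) = wr u := fun u => by rw [hw, hρ u, Sum.elim_inl]
  refine ⟨ρ, hρinj, SegmentJoined.trans (y := (θ.1, extend ρ ar 0)) ?_ ?_⟩
  · exact segmentJoined_of_mem_groupingSlice wr ar ⟨w', fun t => ⟨ρ t, hρ t⟩, hw, hsum⟩
      (extend_mem_groupingSlice wr ar hρinj hρ hw)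
  · exact segmentJoined_of_mem_groupingSlice wr ar
      (extend_mem_groupingSlice wr ar hρinj (repGrouping_apply hρinj)
        (eq_elim_repGrouping hρinj hθρ))
      (canonicalPoint_mem_groupingSlice wr ar hρinj)

theorem segmentJoined_canonicalPoint_update {ρ : Fin r → Fin m} (hρ : Injective ρ) {p : Fin m}
    (hp : p ∉ Set.range ρ) (t : Fin r) :
    SegmentJoined ℝ (expansionManifold r m wr ar)
      (canonicalPoint wr ar ρ) (canonicalPoint wr ar (update ρ t p)) := by
  set ρ' := update ρ t p
  have hρ' : Injective ρ' := hρ.update_of_notMem_range hp t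
  have hne : ∀ u, ρ u ≠ p := fun u h => hp ⟨u, h⟩
  have hρ'_of_ne : ∀ u, u ≠ t → ρ' u = ρ u := fun u hu => update_of_ne hu _ _
  -- In the grouping `k`, neurons `ρ t` and `p` form the group of `t` together, so along its
  -- slice the outgoing weight `ar t` can be handed over from `ρ t` to `p`.
  set w := update (extend ρ wr 0) p (wr t) with hw_def
  set k := update (repGrouping ρ) p (Sum.inl t) with hk_def
  have hwρ : ∀ u, w (ρ u) = wr u := fun u => by
    rw [hw_def, update_of_ne (hne u), hρ.extend_apply]
  have hwρ' : ∀ u, w (ρ' u) = wr u := fun u => by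
    by_cases hu : u = t
    · subst hu; simp [ρ', w]
    · rw [hρ'_of_ne u hu, hwρ]
  have hkρ : ∀ u, k (ρ u) = Sum.inl u := fun u => by
    rw [hk_def, update_of_ne (hne u), repGrouping_apply hρ]
  have hkρ' : ∀ u, k (ρ' u) = Sum.inl u := fun u => by
    by_cases hu : u = t
    · subst hu; simp [ρ', k]
    · rw [hρ'_of_ne u hu, hkρ]
  have hwk : ∀ i, w i = Sum.elim wr w (k i) := fun i => by
    by_cases hi : i = p
    · subst hi; simp [k, w]
    · rw [hk_def, update_of_ne hi]; exact eq_elim_repGrouping hρ hwρ i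
  have leave := segmentJoined_of_mem_groupingSlice wr ar (canonicalPoint_mem_groupingSlice wr ar hρ)
    (extend_mem_groupingSlice wr ar hρ (repGrouping_apply hρ) (eq_elim_repGrouping hρ hwρ))
  have transfer := segmentJoined_of_mem_groupingSlice wr ar
    (extend_mem_groupingSlice wr ar hρ hkρ hwk) (extend_mem_groupingSlice wr ar hρ' hkρ' hwk)
  have arrive := segmentJoined_of_mem_groupingSlice wr ar
    (extend_mem_groupingSlice wr ar hρ' (repGrouping_apply hρ') (eq_elim_repGrouping hρ' hwρ'))
    (canonicalPoint_mem_groupingSlice wr ar hρ')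
  exact leave.trans (transfer.trans arrive)

theorem segmentJoined_canonicalPoint (hm : r < m) {ρ σ : Fin r → Fin m} (hρ : Injective ρ)
    (hσ : Injective σ) :
    SegmentJoined ℝ (expansionManifold r m wr ar)
      (canonicalPoint wr ar ρ) (canonicalPoint wr ar σ) :=
  ReflTransGen.lift' (canonicalPoint wr ar)
    (by rintro _ _ ⟨hf, t, p, hp, rfl⟩; exact segmentJoined_canonicalPoint_update wr ar hf hp t)
    _ _ (reflTransGen_updateMove (by simpa using hm) hρ hσ)

end Slices

theorem expansionManifold_connected_by_segments_general
    {din dout r m : ℕ} (hm : r < m)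
    (wr : Fin r → Fin din → ℝ) (ar : Fin r → Fin dout → ℝ)
    (θ θ' : (Fin m → Fin din → ℝ) × (Fin m → Fin dout → ℝ))
    (hθ : θ ∈ expansionManifold r m wr ar)
    (hθ' : θ' ∈ expansionManifold r m wr ar) :
    ∃ (n : ℕ) (p : Fin (n + 1) → (Fin m → Fin din → ℝ) × (Fin m → Fin dout → ℝ)),
      p 0 = θ ∧ p (Fin.last n) = θ' ∧
      ∀ i : Fin n, segment ℝ (p i.castSucc) (p i.succ) ⊆ expansionManifold r m wr ar := by
  obtain ⟨ρ, hρ, hθρ⟩ := segmentJoined_canonicalPoint_of_mem wr ar hθ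
  obtain ⟨σ, hσ, hθ'σ⟩ := segmentJoined_canonicalPoint_of_mem wr ar hθ'
  exact ReflTransGen.exists_fin_chain
    (hθρ.trans ((segmentJoined_canonicalPoint wr ar hm hρ hσ).trans hθ'σ.symm))

/-- For `m > r`, the expansion manifold `Θ_{r→m}(θ^r)` of an
irreducible `r`-neuron point (pairwise distinct incoming weights, no zero outgoing
weight) is connected by piecewise linear paths: any two of its points are joined by
a finite chain of line segments lying entirely inside the manifold. -/
theorem expansionManifold_connected_by_segments
    {din dout r m : ℕ} (hm : r < m)
    (wr : Fin r → Fin din → ℝ) (ar : Fin r → Fin dout → ℝ)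
    (hirr_w : Function.Injective wr) (hirr_a : ∀ t, ar t ≠ 0)
    (θ θ' : (Fin m → Fin din → ℝ) × (Fin m → Fin dout → ℝ))
    (hθ : θ ∈ expansionManifold r m wr ar)
    (hθ' : θ' ∈ expansionManifold r m wr ar) :
    ∃ (n : ℕ) (p : Fin (n + 1) → (Fin m → Fin din → ℝ) × (Fin m → Fin dout → ℝ)),
      p 0 = θ ∧ p (Fin.last n) = θ' ∧
      ∀ i : Fin n, segment ℝ (p i.castSucc) (p i.succ) ⊆ expansionManifold r m wr ar :=
  expansionManifold_connected_by_segments_general hm wr ar θ θ' hθ hθ'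
end

section
/- Let θ*^r = (w_1*,…,w_r*, a_1*,…,a_r*) be an irreducible critical point of the training loss L^r of a two-layer network of width r (i.e. ∇L^r(θ*^r) = 0). Then every point of the set of symmetry-induced critical points Θ̄_{r→m}(θ*^r) is a critical point of the width-m training loss L^m: for every tuple s = (k_1,…,k_r) with k_i ≥ 1 and k_1+⋯+k_r = m, every permutation π ∈ S_m, and every θ^m ∈ P_π Γ̄_s(θ*^r), one has ∇L^m(θ^m) = 0. -/
/-- The parameter space of a width-`m` two-layer network: each neuron `i` carries an
incoming weight vector (the coordinates `(i, Sum.inl k)`) and an outgoing weight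
vector (the coordinates `(i, Sum.inr o)`). -/
abbrev NNParam (din dout m : ℕ) := EuclideanSpace ℝ (Fin m × (Fin din ⊕ Fin dout))

/-- The incoming weight vector of neuron `i`. -/
def wOf {din dout m : ℕ} (θ : NNParam din dout m) (i : Fin m) : Fin din → ℝ :=
  fun k => θ (i, Sum.inl k)

/-- The outgoing weight vector of neuron `i`. -/
def aOf {din dout m : ℕ} (θ : NNParam din dout m) (i : Fin m) : Fin dout → ℝ :=
  fun o => θ (i, Sum.inr o)

/-- The training loss `L^m(θ) = (1/N) ∑_{(x,y) ∈ Trn} c(f⁽²⁾(x|θ), y)` of the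
two-layer network `f⁽²⁾(x|θ) = ∑ i, a_i σ(w_i · x)` of width `m`. -/
noncomputable def nnLoss {din dout : ℕ} (σ : ℝ → ℝ)
    (c : (Fin dout → ℝ) → (Fin dout → ℝ) → ℝ)
    {N : ℕ} (x : Fin N → Fin din → ℝ) (y : Fin N → Fin dout → ℝ)
    (m : ℕ) (θ : NNParam din dout m) : ℝ :=
  (1 / N : ℝ) * ∑ n, c (fun o => ∑ i, aOf θ i o * σ (∑ k, wOf θ i k * x n k)) (y n)

/-- A point is irreducible if its incoming weight vectors are pairwise distinct
and no outgoing weight vector is zero. -/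
def Irreducible' {din dout m : ℕ} (θ : NNParam din dout m) : Prop :=
  Function.Injective (wOf θ) ∧ ∀ i, aOf θ i ≠ 0

/-- Membership of a width-`m` point `θm` in the set of symmetry-induced critical
points `Θ̄_{r→m}(θr)`, i.e. `⋃_{s, π ∈ S_m} P_π Γ̄_s(θr)`: there is a surjective
grouping map `g : Fin m → Fin r` (surjectivity encodes `k_t ≥ 1`) and coefficients
`β i` with, for each group `t`, `∑_{g i = t} β i = 1`, such that neuron `i` of `θm`
has incoming weight `w*_{g i}` and outgoing weight `β i • a*_{g i}`. -/
def InSymmetryInducedSet {din dout r m : ℕ}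
    (θr : NNParam din dout r) (θm : NNParam din dout m) : Prop :=
  ∃ (g : Fin m → Fin r) (β : Fin m → ℝ),
    Function.Surjective g ∧
    (∀ i, wOf θm i = wOf θr (g i)) ∧
    (∀ i, aOf θm i = β i • aOf θr (g i)) ∧
    (∀ t : Fin r, ∑ i ∈ Finset.univ.filter (fun i => g i = t), β i = 1)

/-!
The width-`m` network at `θm` computes the same function as the width-`r` network at `θr`:
the neurons of a group share the incoming weight `w*_t`, and their outgoing weights
`β_i a*_t` add up to `a*_t`. To first order, moving `θm` in a direction `v` changes the output
as moving `θr` in the direction that sums the outgoing perturbations of each group and takes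
the `β`-weighted sum of its incoming perturbations. So every directional derivative of `L^m`
at `θm` is a directional derivative of `L^r` at `θr`, and these vanish.
-/

open Finset

theorem sum_eq_sum_fiberwise {ι κ M : Type*} [Fintype ι] [Fintype κ] [DecidableEq κ]
    [AddCommMonoid M] (g : ι → κ) (f : ι → κ → M) :
    ∑ i, f i (g i) = ∑ t, ∑ i with g i = t, f i t := by
  rw [← sum_fiberwise univ g]
  exact sum_congr rfl fun t _ => sum_congr rfl fun i hi => by rw [(mem_filter.1 hi).2]

section NetworkCalculus

variable {din dout : ℕ} (σ : ℝ → ℝ)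

def netOutput {m : ℕ} (ξ : Fin din → ℝ) (θ : NNParam din dout m) : Fin dout → ℝ :=
  fun o => ∑ i, aOf θ i o * σ (wOf θ i ⬝ᵥ ξ)

noncomputable def netOutputLineDeriv {m : ℕ} (ξ : Fin din → ℝ) (θ v : NNParam din dout m) :
    Fin dout → ℝ :=
  fun o => ∑ i, (aOf v i o * σ (wOf θ i ⬝ᵥ ξ) + aOf θ i o * (deriv σ (wOf θ i ⬝ᵥ ξ) * wOf v i ⬝ᵥ ξ))

theorem nnLoss_eq_netOutput {m N : ℕ} (c : (Fin dout → ℝ) → (Fin dout → ℝ) → ℝ)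
    (x : Fin N → Fin din → ℝ) (y : Fin N → Fin dout → ℝ) :
    nnLoss σ c x y m = fun θ => (1 / N : ℝ) * ∑ n, c (netOutput σ (x n) θ) (y n) :=
  rfl

variable {σ} {c : (Fin dout → ℝ) → (Fin dout → ℝ) → ℝ} {N : ℕ}
  (x : Fin N → Fin din → ℝ) (y : Fin N → Fin dout → ℝ)

@[simp]
theorem wOf_add_smul {m : ℕ} (θ v : NNParam din dout m) (s : ℝ) (i : Fin m) :
    wOf (θ + s • v) i = wOf θ i + s • wOf v i :=
  rfl

@[simp]
theorem aOf_add_smul {m : ℕ} (θ v : NNParam din dout m) (s : ℝ) (i : Fin m) :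
    aOf (θ + s • v) i = aOf θ i + s • aOf v i :=
  rfl

theorem differentiable_netOutput (hσ : Differentiable ℝ σ) {m : ℕ} (ξ : Fin din → ℝ) :
    Differentiable ℝ (netOutput σ ξ : NNParam din dout m → Fin dout → ℝ) := by
  unfold netOutput wOf aOf dotProduct
  fun_prop

theorem hasLineDerivAt_netOutput (hσ : Differentiable ℝ σ) {m : ℕ} (ξ : Fin din → ℝ)
    (θ v : NNParam din dout m) :
    HasLineDerivAt ℝ (netOutput σ ξ) (netOutputLineDeriv σ ξ θ v) θ v := by
  rw [HasLineDerivAt, hasDerivAt_pi]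
  intro o
  simp only [netOutput, aOf_add_smul, wOf_add_smul, add_dotProduct, smul_dotProduct, Pi.add_apply,
    Pi.smul_apply, smul_eq_mul]
  refine HasDerivAt.fun_sum fun i _ => ?_
  have hout : HasDerivAt (fun t : ℝ => aOf θ i o + t * aOf v i o) (aOf v i o) 0 := by
    simpa using ((hasDerivAt_id (0 : ℝ)).mul_const (aOf v i o)).const_add (aOf θ i o)
  have hpre : HasDerivAt (fun t : ℝ => wOf θ i ⬝ᵥ ξ + t * wOf v i ⬝ᵥ ξ) (wOf v i ⬝ᵥ ξ) 0 := by
    simpa using ((hasDerivAt_id (0 : ℝ)).mul_const (wOf v i ⬝ᵥ ξ)).const_add (wOf θ i ⬝ᵥ ξ)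
  have hact : HasDerivAt (fun t : ℝ => σ (wOf θ i ⬝ᵥ ξ + t * wOf v i ⬝ᵥ ξ))
      (deriv σ (wOf θ i ⬝ᵥ ξ) * wOf v i ⬝ᵥ ξ) 0 :=
    (hσ _).hasDerivAt.comp_of_eq 0 hpre (by simp)
  simpa using hout.fun_mul hact

theorem hasLineDerivAt_nnLoss (hσ : Differentiable ℝ σ)
    (hc : ∀ yv, Differentiable ℝ (fun v => c v yv)) {m : ℕ} (θ v : NNParam din dout m) :
    HasLineDerivAt ℝ (nnLoss σ c x y m)
      ((1 / N : ℝ) * ∑ n, fderiv ℝ (fun u => c u (y n)) (netOutput σ (x n) θ)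
        (netOutputLineDeriv σ (x n) θ v)) θ v := by
  rw [nnLoss_eq_netOutput]
  refine (HasDerivAt.fun_sum fun n _ => ?_).const_mul _
  exact (hc (y n) _).hasFDerivAt.comp_hasDerivAt_of_eq 0 (hasLineDerivAt_netOutput hσ (x n) θ v)
    (by simp)

theorem differentiable_nnLoss (hσ : Differentiable ℝ σ)
    (hc : ∀ yv, Differentiable ℝ (fun v => c v yv)) {m : ℕ} :
    Differentiable ℝ (nnLoss σ c x y m) := by
  rw [nnLoss_eq_netOutput]
  exact (Differentiable.fun_sum fun n _ =>
    (hc (y n)).comp (differentiable_netOutput hσ (x n))).const_mul _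

end NetworkCalculus

section Grouping

variable {din dout r m : ℕ}

def collapseDirection (g : Fin m → Fin r) (β : Fin m → ℝ) (v : NNParam din dout m) :
    NNParam din dout r :=
  WithLp.toLp 2 fun
    | (t, .inl k) => ∑ i with g i = t, β i * wOf v i k
    | (t, .inr o) => ∑ i with g i = t, aOf v i o

theorem wOf_collapseDirection (g : Fin m → Fin r) (β : Fin m → ℝ) (v : NNParam din dout m)
    (t : Fin r) : wOf (collapseDirection g β v) t = ∑ i with g i = t, β i • wOf v i := by
  ext k
  simp [wOf, collapseDirection]

theorem aOf_collapseDirection (g : Fin m → Fin r) (β : Fin m → ℝ) (v : NNParam din dout m)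
    (t : Fin r) : aOf (collapseDirection g β v) t = ∑ i with g i = t, aOf v i := by
  ext o
  simp [aOf, collapseDirection]

variable {σ : ℝ → ℝ} {θr : NNParam din dout r} {θm : NNParam din dout m}
  {g : Fin m → Fin r} {β : Fin m → ℝ}

theorem netOutput_eq_of_grouping (hw : ∀ i, wOf θm i = wOf θr (g i))
    (ha : ∀ i, aOf θm i = β i • aOf θr (g i)) (hβ : ∀ t, ∑ i with g i = t, β i = 1)
    (ξ : Fin din → ℝ) : netOutput σ ξ θm = netOutput σ ξ θr := by
  ext o
  simp only [netOutput, hw, ha, Pi.smul_apply, smul_eq_mul, mul_assoc]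
  rw [sum_eq_sum_fiberwise g fun i t => β i * (aOf θr t o * σ (wOf θr t ⬝ᵥ ξ))]
  simp only [← sum_mul, hβ, one_mul]

theorem netOutputLineDeriv_eq_of_grouping (hw : ∀ i, wOf θm i = wOf θr (g i))
    (ha : ∀ i, aOf θm i = β i • aOf θr (g i)) (ξ : Fin din → ℝ) (v : NNParam din dout m) :
    netOutputLineDeriv σ ξ θm v = netOutputLineDeriv σ ξ θr (collapseDirection g β v) := by
  ext o
  simp only [netOutputLineDeriv, hw, ha, Pi.smul_apply, smul_eq_mul]
  rw [sum_eq_sum_fiberwise g fun i t => aOf v i o * σ (wOf θr t ⬝ᵥ ξ) +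
    β i * aOf θr t o * (deriv σ (wOf θr t ⬝ᵥ ξ) * wOf v i ⬝ᵥ ξ)]
  refine sum_congr rfl fun t _ => ?_
  rw [wOf_collapseDirection, aOf_collapseDirection, Finset.sum_apply, sum_mul, sum_dotProduct,
    mul_sum, mul_sum, ← sum_add_distrib]
  refine sum_congr rfl fun i _ => ?_
  rw [smul_dotProduct, smul_eq_mul]
  ring

theorem fderiv_nnLoss_apply_of_grouping (hσ : Differentiable ℝ σ)
    {c : (Fin dout → ℝ) → (Fin dout → ℝ) → ℝ} (hc : ∀ yv, Differentiable ℝ (fun v => c v yv))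
    {N : ℕ} (x : Fin N → Fin din → ℝ) (y : Fin N → Fin dout → ℝ)
    (hw : ∀ i, wOf θm i = wOf θr (g i)) (ha : ∀ i, aOf θm i = β i • aOf θr (g i))
    (hβ : ∀ t, ∑ i with g i = t, β i = 1) (v : NNParam din dout m) :
    fderiv ℝ (nnLoss σ c x y m) θm v =
      fderiv ℝ (nnLoss σ c x y r) θr (collapseDirection g β v) := by
  rw [← (differentiable_nnLoss x y hσ hc θm).lineDeriv_eq_fderiv,
    ← (differentiable_nnLoss x y hσ hc θr).lineDeriv_eq_fderiv,
    (hasLineDerivAt_nnLoss x y hσ hc θm v).lineDeriv,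
    (hasLineDerivAt_nnLoss x y hσ hc θr _).lineDeriv]
  simp only [netOutput_eq_of_grouping hw ha hβ, netOutputLineDeriv_eq_of_grouping hw ha]

end Grouping

theorem symmetryInduced_points_are_critical_general
    {din dout r m N : ℕ}
    (σ : ℝ → ℝ) (hσ : ContDiff ℝ 1 σ)
    (c : (Fin dout → ℝ) → (Fin dout → ℝ) → ℝ)
    (hcC1 : ∀ yv, ContDiff ℝ 1 (fun v => c v yv))
    (x : Fin N → Fin din → ℝ) (y : Fin N → Fin dout → ℝ)
    (θr : NNParam din dout r)
    (hcrit : gradient (nnLoss σ c x y r) θr = 0)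
    (θm : NNParam din dout m)
    (hmem : InSymmetryInducedSet θr θm) :
    gradient (nnLoss σ c x y m) θm = 0 := by
  obtain ⟨g, β, -, hw, ha, hβ⟩ := hmem
  rw [gradient, LinearIsometryEquiv.map_eq_zero_iff] at hcrit ⊢
  ext v
  rw [fderiv_nnLoss_apply_of_grouping (hσ.differentiable one_ne_zero)
    (fun yv => (hcC1 yv).differentiable one_ne_zero) x y hw ha hβ, hcrit]
  rfl

/-- If `θr` is an irreducible critical point of the width-`r`
training loss `L^r`, then every point of the set of symmetry-induced critical points
`Θ̄_{r→m}(θr)` is a critical point of the width-`m` training loss `L^m`. -/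
theorem symmetryInduced_points_are_critical
    {din dout r m N : ℕ} (hN : 0 < N)
    (σ : ℝ → ℝ) (hσ : ContDiff ℝ 1 σ)
    (c : (Fin dout → ℝ) → (Fin dout → ℝ) → ℝ)
    (hc0 : ∀ v yv, 0 ≤ c v yv)
    (hceq : ∀ v yv, c v yv = 0 ↔ v = yv)
    (hcC1 : ∀ yv, ContDiff ℝ 1 (fun v => c v yv))
    (x : Fin N → Fin din → ℝ) (y : Fin N → Fin dout → ℝ)
    (θr : NNParam din dout r)
    (hirr : Irreducible' θr)
    (hcrit : gradient (nnLoss σ c x y r) θr = 0)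
    (θm : NNParam din dout m)
    (hmem : InSymmetryInducedSet θr θm) :
    gradient (nnLoss σ c x y m) θm = 0 :=
  symmetryInduced_points_are_critical_general σ hσ c hcC1 x y θr hcrit θm hmem
end

section
/- Suppose the single-sample loss c and the activation σ are C² (twice continuously differentiable), and let θ*^r be an irreducible critical point of the width-r training loss L^r. Then for every point θ*^m in the set of symmetry-induced critical points Θ̄_{r→m}(θ*^r), the Hessian ∇²L^m(θ*^m) has at least (m − r) zero eigenvalues; equivalently, the kernel of ∇²L^m(θ*^m) has dimension at least m − r. -/
/-!
At a point `θm` of `Θ̄_{r→m}(θr)` the network output coincides with that of `θr`, and its first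
variation in a direction `u` coincides with the first variation at `θr` in the collapsed direction
obtained by summing, within each group of duplicated neurons, the outgoing perturbations and the
`β`-weighted incoming perturbations. So `∇L^m(θm)` is determined by `∇L^r(θr) = 0`, and every point
of `Θ̄_{r→m}(θr)` is critical. The gradient therefore vanishes along the directions
`(0, γ_i a*_{g i})` whose coefficients `γ` sum to zero on every group, as these move `θm` inside
`Θ̄_{r→m}(θr)`; differentiating, they lie in the kernel of the Hessian. They form a space of
dimension `m - r` because the outgoing vectors `a*_t` are nonzero.
-/

open Finset

section Calculus

variable {E F : Type*} [NormedAddCommGroup E] [NormedSpace ℝ E]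
  [NormedAddCommGroup F] [NormedSpace ℝ F]

lemma le_ker_fderiv_of_forall_add_eq_zero {G : E → F} {x : E} (hG : DifferentiableAt ℝ G x)
    {V : Submodule ℝ E} (hV : ∀ v ∈ V, G (x + v) = 0) :
    V ≤ LinearMap.ker (fderiv ℝ G x : E →ₗ[ℝ] F) := by
  intro v hv
  have hline : HasLineDerivAt ℝ G 0 x v := by
    have : (fun t : ℝ => G (x + t • v)) = fun _ => 0 :=
      funext fun t => hV _ (V.smul_mem t hv)
    simpa [HasLineDerivAt, this] using hasDerivAt_const (0 : ℝ) (0 : F)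
  exact (hG.hasFDerivAt.hasLineDerivAt v).unique hline

end Calculus

section Gradient

variable {F : Type*} [NormedAddCommGroup F] [InnerProductSpace ℝ F] [CompleteSpace F]

lemma gradient_eq_zero_iff {f : F → ℝ} {x : F} : gradient f x = 0 ↔ fderiv ℝ f x = 0 := by
  rw [← (InnerProductSpace.toDual ℝ F).map_eq_zero_iff, toDual_gradient]

lemma ContDiff.differentiable_gradient {f : F → ℝ} {n : WithTop ℕ∞} (hf : ContDiff ℝ n f)
    (hn : 2 ≤ n) : Differentiable ℝ (gradient f) :=
  (InnerProductSpace.toDual ℝ F).symm.toContinuousLinearEquiv.differentiable.comp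
    ((hf.fderiv_right (m := 1) hn).differentiable one_ne_zero)

end Gradient

lemma Finset.sum_comp_eq_sum_fiberwise {ι κ M : Type*} [Fintype ι] [Fintype κ] [DecidableEq κ]
    [AddCommMonoid M] (g : ι → κ) (G : ι → κ → M) :
    ∑ i, G i (g i) = ∑ t, ∑ i with g i = t, G i t := by
  rw [← sum_fiberwise univ g]
  exact sum_congr rfl fun t _ => sum_congr rfl fun i hi => by rw [(mem_filter.1 hi).2]

section FiberSum

variable (R : Type*) {ι κ : Type*} [Fintype ι] [DecidableEq κ]

def fiberSum [Semiring R] (g : ι → κ) : (ι → R) →ₗ[R] (κ → R) where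
  toFun γ t := ∑ i with g i = t, γ i
  map_add' _ _ := funext fun _ => sum_add_distrib
  map_smul' _ _ := funext fun _ => (mul_sum _ _ _).symm

variable {R}

lemma fiberSum_apply [Semiring R] (g : ι → κ) (γ : ι → R) (t : κ) :
    fiberSum R g γ t = ∑ i with g i = t, γ i := rfl

lemma fiberSum_single [Semiring R] [DecidableEq ι] (g : ι → κ) (i : ι) (a : R) :
    fiberSum R g (Pi.single i a) = Pi.single (g i) a := by
  ext t
  simp [fiberSum_apply, Pi.single_apply, eq_comm]

lemma fiberSum_surjective [Semiring R] [Fintype κ] {g : ι → κ} (hg : Function.Surjective g) :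
    Function.Surjective (fiberSum R g) := by
  classical
  intro φ
  refine ⟨∑ t, Pi.single (Function.surjInv hg t) (φ t), ?_⟩
  simp [map_sum, fiberSum_single, Function.surjInv_eq hg, univ_sum_single]

lemma finrank_ker_fiberSum [Field R] [Fintype κ] {g : ι → κ} (hg : Function.Surjective g) :
    Module.finrank R (LinearMap.ker (fiberSum R g)) = Fintype.card ι - Fintype.card κ := by
  have := (fiberSum R g).finrank_range_add_finrank_ker
  rw [LinearMap.range_eq_top.mpr (fiberSum_surjective hg), finrank_top,
    Module.finrank_fintype_fun_eq_card, Module.finrank_fintype_fun_eq_card] at this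
  omega

end FiberSum

section Network

variable {din dout N : ℕ} (σ : ℝ → ℝ) (x : Fin N → Fin din → ℝ)

lemma wOf_add {m : ℕ} (θ u : NNParam din dout m) (i : Fin m) :
    wOf (θ + u) i = wOf θ i + wOf u i := rfl

lemma aOf_add {m : ℕ} (θ u : NNParam din dout m) (i : Fin m) :
    aOf (θ + u) i = aOf θ i + aOf u i := rfl

lemma wOf_smul {m : ℕ} (t : ℝ) (u : NNParam din dout m) (i : Fin m) :
    wOf (t • u) i = t • wOf u i := rfl

lemma aOf_smul {m : ℕ} (t : ℝ) (u : NNParam din dout m) (i : Fin m) :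
    aOf (t • u) i = t • aOf u i := rfl

def network (m : ℕ) (θ : NNParam din dout m) : Fin N → Fin dout → ℝ :=
  fun n o => ∑ i, aOf θ i o * σ (wOf θ i ⬝ᵥ x n)

noncomputable def networkLineDeriv (m : ℕ) (θ u : NNParam din dout m) : Fin N → Fin dout → ℝ :=
  fun n o => ∑ i, (aOf u i o * σ (wOf θ i ⬝ᵥ x n)
    + aOf θ i o * (deriv σ (wOf θ i ⬝ᵥ x n) * (wOf u i ⬝ᵥ x n)))

noncomputable def empiricalRisk (c : (Fin dout → ℝ) → (Fin dout → ℝ) → ℝ)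
    (y : Fin N → Fin dout → ℝ) (v : Fin N → Fin dout → ℝ) : ℝ :=
  (1 / N : ℝ) * ∑ n, c (v n) (y n)

lemma nnLoss_eq_comp (c : (Fin dout → ℝ) → (Fin dout → ℝ) → ℝ) (y : Fin N → Fin dout → ℝ)
    (m : ℕ) : nnLoss σ c x y m = empiricalRisk c y ∘ network σ x m := rfl

lemma differentiable_empiricalRisk {c : (Fin dout → ℝ) → (Fin dout → ℝ) → ℝ}
    (hc : ∀ yv, Differentiable ℝ (fun v => c v yv)) (y : Fin N → Fin dout → ℝ) :
    Differentiable ℝ (empiricalRisk c y) :=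
  (Differentiable.fun_sum fun n _ => (hc (y n)).comp (differentiable_apply n)).const_mul _

lemma contDiff_network {n : WithTop ℕ∞} (hσ : ContDiff ℝ n σ) (m : ℕ) :
    ContDiff ℝ n (network (dout := dout) σ x m) := by
  unfold network wOf aOf dotProduct
  fun_prop

lemma differentiable_network (hσ : Differentiable ℝ σ) (m : ℕ) :
    Differentiable ℝ (network (dout := dout) σ x m) := by
  unfold network wOf aOf dotProduct
  fun_prop

lemma hasDerivAt_affine_mul_comp_affine {σ : ℝ → ℝ} {S : ℝ} (hσ : DifferentiableAt ℝ σ S)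
    (A B T : ℝ) :
    HasDerivAt (fun t => (A + t * B) * σ (S + t * T)) (B * σ S + A * (deriv σ S * T)) 0 := by
  have hA : HasDerivAt (fun t : ℝ => A + t * B) B 0 := (hasDerivAt_mul_const B).const_add A
  have hS : HasDerivAt (fun t : ℝ => S + t * T) T 0 := (hasDerivAt_mul_const T).const_add S
  have hσS : HasDerivAt (fun t => σ (S + t * T)) (deriv σ S * T) 0 :=
    hσ.hasDerivAt.comp_of_eq 0 hS (by simp)
  simpa using hA.fun_mul hσS

lemma hasDerivAt_network_line (hσ : Differentiable ℝ σ) {m : ℕ} (θ u : NNParam din dout m) :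
    HasDerivAt (fun t : ℝ => network σ x m (θ + t • u)) (networkLineDeriv σ x m θ u) 0 := by
  refine hasDerivAt_pi.mpr fun n => hasDerivAt_pi.mpr fun o => HasDerivAt.fun_sum fun i _ => ?_
  refine (hasDerivAt_affine_mul_comp_affine (hσ (wOf θ i ⬝ᵥ x n)) (aOf θ i o) (aOf u i o)
    (wOf u i ⬝ᵥ x n)).congr_of_eventuallyEq (.of_forall fun t => ?_)
  simp [wOf_add, aOf_add, wOf_smul, aOf_smul, add_dotProduct]

lemma contDiff_empiricalRisk {n : WithTop ℕ∞} {c : (Fin dout → ℝ) → (Fin dout → ℝ) → ℝ}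
    (hc : ∀ yv, ContDiff ℝ n (fun v => c v yv)) (y : Fin N → Fin dout → ℝ) :
    ContDiff ℝ n (empiricalRisk c y) :=
  contDiff_const.mul (ContDiff.sum fun i _ => (hc (y i)).comp (contDiff_apply ℝ _ i))

variable {c : (Fin dout → ℝ) → (Fin dout → ℝ) → ℝ} (y : Fin N → Fin dout → ℝ)

lemma contDiff_nnLoss {n : WithTop ℕ∞} (hσ : ContDiff ℝ n σ)
    (hc : ∀ yv, ContDiff ℝ n (fun v => c v yv)) (m : ℕ) :
    ContDiff ℝ n (nnLoss σ c x y m) := by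
  rw [nnLoss_eq_comp]
  exact (contDiff_empiricalRisk hc y).comp (contDiff_network σ x hσ m)

lemma fderiv_nnLoss_apply (hσ : Differentiable ℝ σ)
    (hc : ∀ yv, Differentiable ℝ (fun v => c v yv)) {m : ℕ} (θ u : NNParam din dout m) :
    fderiv ℝ (nnLoss σ c x y m) θ u =
      fderiv ℝ (empiricalRisk c y) (network σ x m θ) (networkLineDeriv σ x m θ u) := by
  have hL : DifferentiableAt ℝ (nnLoss σ c x y m) θ :=
    (differentiable_empiricalRisk hc y).comp (differentiable_network σ x hσ m) θ
  have hR : HasFDerivAt (empiricalRisk c y) (fderiv ℝ (empiricalRisk c y) (network σ x m θ))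
      (network σ x m (θ + (0 : ℝ) • u)) := by
    rw [zero_smul, add_zero]
    exact (differentiable_empiricalRisk hc y _).hasFDerivAt
  have hcomp := hR.comp_hasDerivAt 0 (hasDerivAt_network_line σ x hσ θ u)
  exact (hL.hasFDerivAt.hasLineDerivAt u).unique hcomp

end Network

section Lift

variable {din dout N r m : ℕ} (σ : ℝ → ℝ) (x : Fin N → Fin din → ℝ)
  {c : (Fin dout → ℝ) → (Fin dout → ℝ) → ℝ} (y : Fin N → Fin dout → ℝ)
  {θr : NNParam din dout r} {θm : NNParam din dout m} {g : Fin m → Fin r} {β : Fin m → ℝ}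

def collapseTangent (g : Fin m → Fin r) (β : Fin m → ℝ) (u : NNParam din dout m) :
    NNParam din dout r :=
  WithLp.toLp 2 fun p => Sum.elim (∑ i with g i = p.1, β i • wOf u i)
    (∑ i with g i = p.1, aOf u i) p.2

lemma wOf_collapseTangent (u : NNParam din dout m) (t : Fin r) :
    wOf (collapseTangent g β u) t = ∑ i with g i = t, β i • wOf u i := rfl

lemma aOf_collapseTangent (u : NNParam din dout m) (t : Fin r) :
    aOf (collapseTangent g β u) t = ∑ i with g i = t, aOf u i := rfl

variable (hw : ∀ i, wOf θm i = wOf θr (g i)) (ha : ∀ i, aOf θm i = β i • aOf θr (g i))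
include hw ha

lemma network_eq_of_lift (hβ : ∀ t, ∑ i with g i = t, β i = 1) :
    network σ x m θm = network σ x r θr := by
  ext n o
  simp only [network, hw, ha, Pi.smul_apply, smul_eq_mul, mul_assoc]
  rw [sum_comp_eq_sum_fiberwise g fun i t => β i * (aOf θr t o * σ (wOf θr t ⬝ᵥ x n))]
  simp only [← sum_mul, hβ, one_mul]

lemma networkLineDeriv_eq_of_lift (u : NNParam din dout m) :
    networkLineDeriv σ x m θm u = networkLineDeriv σ x r θr (collapseTangent g β u) := by
  ext n o
  simp only [networkLineDeriv, hw, ha]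
  rw [sum_comp_eq_sum_fiberwise g fun i t => aOf u i o * σ (wOf θr t ⬝ᵥ x n)
    + (β i • aOf θr t) o * (deriv σ (wOf θr t ⬝ᵥ x n) * (wOf u i ⬝ᵥ x n))]
  refine sum_congr rfl fun t _ => ?_
  simp only [wOf_collapseTangent, aOf_collapseTangent, Finset.sum_apply, sum_dotProduct,
    smul_dotProduct, sum_add_distrib, sum_mul, mul_sum, Pi.smul_apply, smul_eq_mul]
  congr 1
  exact sum_congr rfl fun i _ => by ring

variable (hσ : Differentiable ℝ σ) (hc : ∀ yv, Differentiable ℝ (fun v => c v yv))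
include hσ hc

lemma fderiv_nnLoss_apply_eq_of_lift (hβ : ∀ t, ∑ i with g i = t, β i = 1)
    (u : NNParam din dout m) :
    fderiv ℝ (nnLoss σ c x y m) θm u =
      fderiv ℝ (nnLoss σ c x y r) θr (collapseTangent g β u) := by
  rw [fderiv_nnLoss_apply σ x y hσ hc, fderiv_nnLoss_apply σ x y hσ hc,
    network_eq_of_lift σ x hw ha hβ, networkLineDeriv_eq_of_lift σ x hw ha]

lemma gradient_nnLoss_eq_zero_of_lift (hβ : ∀ t, ∑ i with g i = t, β i = 1)
    (hcrit : gradient (nnLoss σ c x y r) θr = 0) : gradient (nnLoss σ c x y m) θm = 0 := by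
  rw [gradient_eq_zero_iff] at hcrit ⊢
  ext u
  rw [fderiv_nnLoss_apply_eq_of_lift σ x y hw ha hσ hc hβ, hcrit]
  rfl

end Lift

section FlatDirections

variable {din dout r m : ℕ}

def outgoingDirection (θr : NNParam din dout r) (g : Fin m → Fin r) :
    (Fin m → ℝ) →ₗ[ℝ] NNParam din dout m where
  toFun γ := WithLp.toLp 2 fun p => Sum.elim 0 (γ p.1 • aOf θr (g p.1)) p.2
  map_add' _ _ := by
    ext ⟨i, k | o⟩
    · simp
    · simp [add_mul]
  map_smul' _ _ := by
    ext ⟨i, k | o⟩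
    · simp
    · simp [mul_assoc]

lemma wOf_outgoingDirection (θr : NNParam din dout r) (g : Fin m → Fin r) (γ : Fin m → ℝ)
    (i : Fin m) :
    wOf (outgoingDirection θr g γ) i = 0 := rfl

lemma aOf_outgoingDirection (θr : NNParam din dout r) (g : Fin m → Fin r) (γ : Fin m → ℝ)
    (i : Fin m) :
    aOf (outgoingDirection θr g γ) i = γ i • aOf θr (g i) := rfl

lemma outgoingDirection_injective {θr : NNParam din dout r} (ha : ∀ t, aOf θr t ≠ 0)
    (g : Fin m → Fin r) : Function.Injective (outgoingDirection θr g) := by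
  rw [← LinearMap.ker_eq_bot, LinearMap.ker_eq_bot']
  intro γ hγ
  funext i
  have hi : γ i • aOf θr (g i) = 0 := by
    rw [← aOf_outgoingDirection, hγ]
    rfl
  exact (smul_eq_zero.mp hi).resolve_right (ha (g i))

end FlatDirections

section Hessian

variable {din dout N r m : ℕ} (σ : ℝ → ℝ) (x : Fin N → Fin din → ℝ)
  {c : (Fin dout → ℝ) → (Fin dout → ℝ) → ℝ} (y : Fin N → Fin dout → ℝ)
  {θr : NNParam din dout r} {θm : NNParam din dout m} {g : Fin m → Fin r} {β : Fin m → ℝ}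

lemma map_ker_fiberSum_le_ker_hessian (hσ : ContDiff ℝ 2 σ)
    (hc : ∀ yv, ContDiff ℝ 2 (fun v => c v yv)) (hcrit : gradient (nnLoss σ c x y r) θr = 0)
    (hw : ∀ i, wOf θm i = wOf θr (g i)) (ha : ∀ i, aOf θm i = β i • aOf θr (g i))
    (hβ : ∀ t, ∑ i with g i = t, β i = 1) :
    (LinearMap.ker (fiberSum ℝ g)).map (outgoingDirection θr g) ≤
      LinearMap.ker (fderiv ℝ (gradient (nnLoss σ c x y m)) θm :
        NNParam din dout m →ₗ[ℝ] NNParam din dout m) := by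
  refine le_ker_fderiv_of_forall_add_eq_zero
    ((contDiff_nnLoss σ x y hσ hc m).differentiable_gradient le_rfl θm) ?_
  rintro _ ⟨γ, hγ, rfl⟩
  refine gradient_nnLoss_eq_zero_of_lift σ x y (g := g) (β := β + γ) (fun i => ?_) (fun i => ?_)
    (hσ.differentiable (by norm_num)) (fun yv => (hc yv).differentiable (by norm_num))
    (fun t => ?_) hcrit
  · rw [wOf_add, wOf_outgoingDirection, add_zero, hw]
  · rw [aOf_add, aOf_outgoingDirection, ha, Pi.add_apply, add_smul]
  · rw [← fiberSum_apply, map_add, LinearMap.mem_ker.mp hγ, add_zero, fiberSum_apply, hβ]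

end Hessian

theorem symmetryInduced_hessian_kernel_dim_general
    {din dout r m N : ℕ}
    (σ : ℝ → ℝ) (hσ : ContDiff ℝ 2 σ)
    (c : (Fin dout → ℝ) → (Fin dout → ℝ) → ℝ)
    (hcC2 : ∀ yv, ContDiff ℝ 2 (fun v => c v yv))
    (x : Fin N → Fin din → ℝ) (y : Fin N → Fin dout → ℝ)
    (θr : NNParam din dout r)
    (hirr : Irreducible' θr)
    (hcrit : gradient (nnLoss σ c x y r) θr = 0)
    (θm : NNParam din dout m)
    (hmem : InSymmetryInducedSet θr θm) :
    m - r ≤ Module.finrank ℝ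
      (LinearMap.ker ((fderiv ℝ (gradient (nnLoss σ c x y m)) θm :
        NNParam din dout m →ₗ[ℝ] NNParam din dout m))) := by
  obtain ⟨g, β, hg, hw, ha, hβ⟩ := hmem
  calc m - r = Module.finrank ℝ (LinearMap.ker (fiberSum ℝ g)) := by
        simp [finrank_ker_fiberSum hg]
    _ = Module.finrank ℝ ((LinearMap.ker (fiberSum ℝ g)).map (outgoingDirection θr g)) :=
        (LinearEquiv.finrank_eq (Submodule.equivMapOfInjective _
          (outgoingDirection_injective hirr.2 g) _))
    _ ≤ _ := Submodule.finrank_mono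
        (map_ker_fiberSum_le_ker_hessian σ x y hσ hcC2 hcrit hw ha hβ)

/-- Suppose `c` and `σ` are C² and `θr` is an irreducible critical
point of the width-`r` training loss. Then at every symmetry-induced critical point
`θm ∈ Θ̄_{r→m}(θr)`, the Hessian `∇²L^m(θm) = D(∇L^m)(θm)` has at least `m - r` zero
eigenvalues: its kernel has dimension at least `m - r`. -/
theorem symmetryInduced_hessian_kernel_dim
    {din dout r m N : ℕ} (hN : 0 < N)
    (σ : ℝ → ℝ) (hσ : ContDiff ℝ 2 σ)
    (c : (Fin dout → ℝ) → (Fin dout → ℝ) → ℝ)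
    (hc0 : ∀ v yv, 0 ≤ c v yv)
    (hceq : ∀ v yv, c v yv = 0 ↔ v = yv)
    (hcC2 : ∀ yv, ContDiff ℝ 2 (fun v => c v yv))
    (x : Fin N → Fin din → ℝ) (y : Fin N → Fin dout → ℝ)
    (θr : NNParam din dout r)
    (hirr : Irreducible' θr)
    (hcrit : gradient (nnLoss σ c x y r) θr = 0)
    (θm : NNParam din dout m)
    (hmem : InSymmetryInducedSet θr θm) :
    m - r ≤ Module.finrank ℝ
      (LinearMap.ker ((fderiv ℝ (gradient (nnLoss σ c x y m)) θm :
        NNParam din dout m →ₗ[ℝ] NNParam din dout m))) :=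
  symmetryInduced_hessian_kernel_dim_general σ hσ c hcC2 x y θr hirr hcrit θm hmem
end

section
/- Let σ : ℝ → ℝ be a C^∞ function with σ(0) ≠ 0 such that σ^{(n)}(0) ≠ 0 for infinitely many even n and for infinitely many odd n. Let β_1,…,β_k ∈ ℝ be pairwise distinct nonzero reals, a_1,…,a_k ∈ ℝ^{d_out}, and c ∈ ℝ^{d_out}. If Σ_{ℓ=1}^k a_ℓ σ(α β_ℓ) = c for all α ∈ ℝ, then a_ℓ = 0 for all ℓ ∈ [k]. -/
open Finset Filter Topology

/-- Iterated derivative of a constant function (positive order) vanishes. -/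
lemma my_iteratedDeriv_const_succ (n : ℕ) (c : ℝ) :
    iteratedDeriv (n + 1) (fun _ : ℝ => c) = fun _ => 0 := by
  induction n generalizing c with
  | zero => rw [iteratedDeriv_succ', deriv_const', iteratedDeriv_zero]
  | succ m ih => rw [iteratedDeriv_succ', deriv_const']; exact ih 0

/-- Iterated derivative of a finite sum. -/
lemma my_iteratedDeriv_sum {ι : Type*} (u : Finset ι) (f : ι → ℝ → ℝ) (n : ℕ) (x : ℝ)
    (hf : ∀ i ∈ u, ContDiff ℝ n (f i)) :
    iteratedDeriv n (fun y => ∑ i ∈ u, f i y) x = ∑ i ∈ u, iteratedDeriv n (f i) x := by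
  simp_rw [iteratedDeriv_eq_iteratedFDeriv]
  rw [show (fun y => ∑ i ∈ u, f i y) = (∑ i ∈ u, f i ·) from rfl, iteratedFDeriv_sum hf]
  simp [ContinuousMultilinearMap.sum_apply]

/-- Iterated derivative of a constant multiple. -/
lemma my_iteratedDeriv_cmul {n : ℕ} {f : ℝ → ℝ} (hf : ContDiff ℝ n f) (c x : ℝ) :
    iteratedDeriv n (fun y => c * f y) x = c * iteratedDeriv n f x := by
  simp_rw [← iteratedDerivWithin_univ]
  exact iteratedDerivWithin_const_mul (Set.mem_univ x) uniqueDiffOn_univ c hf.contDiffAt.contDiffWithinAt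

/-- If an exponential sum with distinct positive bases vanishes for infinitely many
natural exponents, all coefficients vanish. -/
lemma expsum_eq_zero : ∀ (s : Finset ℝ), (∀ γ ∈ s, 0 < γ) → ∀ (d : ℝ → ℝ),
    {m : ℕ | ∑ γ ∈ s, d γ * γ ^ m = 0}.Infinite → ∀ γ ∈ s, d γ = 0 := by
  intro s
  induction s using Finset.strongInduction with
  | _ s ih =>
  intro hpos d h
  rcases s.eq_empty_or_nonempty with rfl | hne
  · simp
  set γ0 := s.max' hne with hγ0def
  have hγ0mem : γ0 ∈ s := s.max'_mem hne
  have hγ0pos : 0 < γ0 := hpos _ hγ0mem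
  set S := {m : ℕ | ∑ γ ∈ s, d γ * γ ^ m = 0} with hS
  have key : ∀ m ∈ S, d γ0 = -∑ γ ∈ s.erase γ0, d γ * (γ / γ0) ^ m := by
    intro m hm
    have hsum : d γ0 * γ0 ^ m + ∑ γ ∈ s.erase γ0, d γ * γ ^ m = 0 := by
      rw [Finset.add_sum_erase _ (fun γ => d γ * γ ^ m) hγ0mem]; exact hm
    have hγ0n : (γ0 : ℝ) ^ m ≠ 0 := pow_ne_zero _ hγ0pos.ne'
    have : ∑ γ ∈ s.erase γ0, d γ * (γ / γ0) ^ m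
        = (∑ γ ∈ s.erase γ0, d γ * γ ^ m) / γ0 ^ m := by
      rw [Finset.sum_div]
      exact Finset.sum_congr rfl fun γ _ => by rw [div_pow, mul_div_assoc]
    have hm' : ∑ γ ∈ s, d γ * γ ^ m = 0 := hm
    rw [this]
    field_simp
    linarith [hsum, hm']
  -- limit argument
  have hlim : Tendsto (fun m : ℕ => -∑ γ ∈ s.erase γ0, d γ * (γ / γ0) ^ m)
      atTop (𝓝 0) := by
    have : Tendsto (fun m : ℕ => ∑ γ ∈ s.erase γ0, d γ * (γ / γ0) ^ m)
        atTop (𝓝 (∑ γ ∈ s.erase γ0, 0)) := by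
      refine tendsto_finset_sum _ fun γ hγ => ?_
      have hγs : γ ∈ s := Finset.mem_of_mem_erase hγ
      have hγlt : γ < γ0 := lt_of_le_of_ne (s.le_max' _ hγs) (Finset.ne_of_mem_erase hγ)
      have h1 : Tendsto (fun m : ℕ => (γ / γ0) ^ m) atTop (𝓝 0) :=
        tendsto_pow_atTop_nhds_zero_of_lt_one
          (div_nonneg (hpos _ hγs).le hγ0pos.le) ((div_lt_one hγ0pos).mpr hγlt)
      simpa using h1.const_mul (d γ)
    simpa using this.neg
  have hdγ0 : d γ0 = 0 := by
    have hφ : Tendsto (Nat.nth (· ∈ S)) atTop atTop :=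
      (Nat.nth_strictMono h).tendsto_atTop
    have hcomp : Tendsto (fun m : ℕ =>
        -∑ γ ∈ s.erase γ0, d γ * (γ / γ0) ^ (Nat.nth (· ∈ S) m)) atTop (𝓝 0) :=
      hlim.comp hφ
    have heq : (fun m : ℕ =>
        -∑ γ ∈ s.erase γ0, d γ * (γ / γ0) ^ (Nat.nth (· ∈ S) m)) = fun _ => d γ0 := by
      funext m
      exact (key _ (Nat.nth_mem_of_infinite h m)).symm
    rw [heq] at hcomp
    exact tendsto_nhds_unique tendsto_const_nhds hcomp
  have herase : ∀ γ ∈ s.erase γ0, d γ = 0 := by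
    refine ih _ (Finset.erase_ssubset hγ0mem) (fun γ hγ => hpos _ (Finset.mem_of_mem_erase hγ)) d ?_
    refine Set.Infinite.mono ?_ h
    intro m hm
    have : ∑ γ ∈ s, d γ * γ ^ m = 0 := hm
    have h2 : d γ0 * γ0 ^ m + ∑ γ ∈ s.erase γ0, d γ * γ ^ m = 0 := by
      rw [Finset.add_sum_erase _ (fun γ => d γ * γ ^ m) hγ0mem]; exact this
    simpa [hdγ0] using h2
  intro γ hγ
  rcases eq_or_ne γ γ0 with rfl | hne'
  · exact hdγ0
  · exact herase γ (Finset.mem_erase.mpr ⟨hne', hγ⟩)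

/-- Let `σ : ℝ → ℝ` be `C^∞` with `σ 0 ≠ 0` and with
`σ⁽ⁿ⁾(0) ≠ 0` for infinitely many even `n` and infinitely many odd `n`
(Assumption A). If `β₁, …, β_k` are pairwise distinct nonzero reals,
`a₁, …, a_k ∈ ℝ^{d_out}`, `c ∈ ℝ^{d_out}`, and
`∑ ℓ, σ(α βℓ) • aℓ = c` for all `α ∈ ℝ`, then all `aℓ = 0`. -/
theorem vandermonde_lemma
    {dout k : ℕ} (σ : ℝ → ℝ)
    (hσ : ContDiff ℝ (⊤ : ℕ∞) σ) (hσ0 : σ 0 ≠ 0)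
    (heven : {n : ℕ | Even n ∧ iteratedDeriv n σ 0 ≠ 0}.Infinite)
    (hodd : {n : ℕ | Odd n ∧ iteratedDeriv n σ 0 ≠ 0}.Infinite)
    (β : Fin k → ℝ) (hβinj : Function.Injective β) (hβ0 : ∀ ℓ, β ℓ ≠ 0)
    (a : Fin k → Fin dout → ℝ) (c : Fin dout → ℝ)
    (h : ∀ α : ℝ, ∑ ℓ, σ (α * β ℓ) • a ℓ = c) :
    ∀ ℓ, a ℓ = 0 := by
  classical
  intro ℓ0
  funext j
  show a ℓ0 j = (0 : ℝ)
  set cc : Fin k → ℝ := fun ℓ => a ℓ j with hcc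
  -- componentwise hypothesis
  have hj : ∀ α : ℝ, ∑ ℓ, cc ℓ * σ (β ℓ * α) = c j := by
    intro α
    have hα := congrFun (h α) j
    rw [Finset.sum_apply] at hα
    simp only [Pi.smul_apply, smul_eq_mul] at hα
    rw [← hα]
    exact Finset.sum_congr rfl fun ℓ _ => by rw [mul_comm (cc ℓ), mul_comm α (β ℓ)]
  -- derivative relations
  have hrel : ∀ n : ℕ, n ≠ 0 → iteratedDeriv n σ 0 ≠ 0 → ∑ ℓ, cc ℓ * β ℓ ^ n = 0 := by
    intro n hn hD
    have hg : (fun α => ∑ ℓ, cc ℓ * σ (β ℓ * α)) = fun _ => c j := funext hj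
    have hσn : ContDiff ℝ n σ := hσ.of_le (by exact_mod_cast le_top)
    have hσc : ∀ ℓ : Fin k, ContDiff ℝ n (fun x : ℝ => σ (β ℓ * x)) := fun ℓ =>
      hσn.comp (contDiff_const.mul contDiff_id)
    have h1 : iteratedDeriv n (fun α => ∑ ℓ, cc ℓ * σ (β ℓ * α)) 0
        = ∑ ℓ, cc ℓ * (β ℓ ^ n * iteratedDeriv n σ (β ℓ * 0)) := by
      rw [my_iteratedDeriv_sum Finset.univ _ n 0
        (fun ℓ _ => contDiff_const.mul (hσc ℓ))]
      refine Finset.sum_congr rfl fun ℓ _ => ?_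
      rw [my_iteratedDeriv_cmul (hσc ℓ) (cc ℓ) 0]
      congr 1
      exact congrFun (iteratedDeriv_comp_const_mul hσn (β ℓ)) 0
    have h2 : iteratedDeriv n (fun α => ∑ ℓ, cc ℓ * σ (β ℓ * α)) 0 = 0 := by
      rw [hg]
      obtain ⟨m, rfl⟩ := Nat.exists_eq_succ_of_ne_zero hn
      rw [my_iteratedDeriv_const_succ]
    rw [h1] at h2
    simp only [mul_zero] at h2
    have h3 : (∑ ℓ, cc ℓ * β ℓ ^ n) * iteratedDeriv n σ 0 = 0 := by
      calc (∑ ℓ, cc ℓ * β ℓ ^ n) * iteratedDeriv n σ 0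
          = ∑ ℓ, cc ℓ * (β ℓ ^ n * iteratedDeriv n σ 0) := by
            rw [Finset.sum_mul]
            exact Finset.sum_congr rfl fun ℓ _ => by ring
        _ = 0 := h2
    exact (mul_eq_zero.mp h3).resolve_right hD
  -- grouping by β²
  set s : Finset ℝ := Finset.univ.image (fun ℓ : Fin k => β ℓ ^ 2) with hs
  have hspos : ∀ γ ∈ s, 0 < γ := by
    intro γ hγ
    obtain ⟨ℓ, -, rfl⟩ := Finset.mem_image.mp hγ
    exact pow_two_pos_of_ne_zero (hβ0 ℓ)
  have hmaps : ∀ ℓ : Fin k, ℓ ∈ Finset.univ → β ℓ ^ 2 ∈ s := fun ℓ _ =>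
    Finset.mem_image_of_mem _ (Finset.mem_univ ℓ)
  -- even relation
  have heq_even : ∀ m : ℕ,
      ∑ γ ∈ s, (∑ ℓ ∈ Finset.univ.filter (fun ℓ => β ℓ ^ 2 = γ), cc ℓ) * γ ^ m
        = ∑ ℓ, cc ℓ * β ℓ ^ (2 * m) := by
    intro m
    rw [← Finset.sum_fiberwise_of_maps_to hmaps (fun ℓ => cc ℓ * β ℓ ^ (2 * m))]
    refine Finset.sum_congr rfl fun γ hγ => ?_
    rw [Finset.sum_mul]
    refine Finset.sum_congr rfl fun ℓ hℓ => ?_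
    have hγeq : β ℓ ^ 2 = γ := (Finset.mem_filter.mp hℓ).2
    rw [← hγeq]
    ring
  have heq_odd : ∀ m : ℕ,
      ∑ γ ∈ s, (∑ ℓ ∈ Finset.univ.filter (fun ℓ => β ℓ ^ 2 = γ), β ℓ * cc ℓ) * γ ^ m
        = ∑ ℓ, cc ℓ * β ℓ ^ (2 * m + 1) := by
    intro m
    rw [← Finset.sum_fiberwise_of_maps_to hmaps (fun ℓ => cc ℓ * β ℓ ^ (2 * m + 1))]
    refine Finset.sum_congr rfl fun γ hγ => ?_
    rw [Finset.sum_mul]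
    refine Finset.sum_congr rfl fun ℓ hℓ => ?_
    have hγeq : β ℓ ^ 2 = γ := (Finset.mem_filter.mp hℓ).2
    rw [← hγeq]
    ring
  -- infinitude of good exponents
  have hEinf : {m : ℕ | ∑ ℓ, cc ℓ * β ℓ ^ (2 * m) = 0}.Infinite := by
    have h1 : ({n : ℕ | Even n ∧ iteratedDeriv n σ 0 ≠ 0} \ {0}).Infinite :=
      heven.diff (Set.finite_singleton 0)
    have h2 : Set.InjOn (fun n : ℕ => n / 2)
        ({n : ℕ | Even n ∧ iteratedDeriv n σ 0 ≠ 0} \ {0}) := by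
      intro n₁ hn₁ n₂ hn₂ hdiv
      simp only at hdiv
      have e1 := Nat.two_mul_div_two_of_even hn₁.1.1
      have e2 := Nat.two_mul_div_two_of_even hn₂.1.1
      omega
    refine Set.Infinite.mono ?_ (h1.image h2)
    rintro m ⟨n, ⟨⟨hev, hD⟩, hn0⟩, rfl⟩
    show ∑ ℓ, cc ℓ * β ℓ ^ (2 * (n / 2)) = 0
    rw [Nat.two_mul_div_two_of_even hev]
    exact hrel n (by simpa using hn0) hD
  have hOinf : {m : ℕ | ∑ ℓ, cc ℓ * β ℓ ^ (2 * m + 1) = 0}.Infinite := by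
    have h2 : Set.InjOn (fun n : ℕ => n / 2)
        {n : ℕ | Odd n ∧ iteratedDeriv n σ 0 ≠ 0} := by
      intro n₁ hn₁ n₂ hn₂ hdiv
      simp only at hdiv
      have e1 := Nat.two_mul_div_two_add_one_of_odd hn₁.1
      have e2 := Nat.two_mul_div_two_add_one_of_odd hn₂.1
      omega
    refine Set.Infinite.mono ?_ (hodd.image h2)
    rintro m ⟨n, ⟨hoddn, hD⟩, rfl⟩
    show ∑ ℓ, cc ℓ * β ℓ ^ (2 * (n / 2) + 1) = 0
    rw [Nat.two_mul_div_two_add_one_of_odd hoddn]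
    exact hrel n (by rintro rfl; simp at hoddn) hD
  -- apply the exponential sum lemma
  have hd0 : ∀ γ ∈ s, (∑ ℓ ∈ Finset.univ.filter (fun ℓ => β ℓ ^ 2 = γ), cc ℓ) = 0 := by
    refine expsum_eq_zero s hspos _ ?_
    refine Set.Infinite.mono ?_ hEinf
    intro m hm
    show ∑ γ ∈ s, _ * γ ^ m = 0
    rw [heq_even m]
    exact hm
  have he0 : ∀ γ ∈ s,
      (∑ ℓ ∈ Finset.univ.filter (fun ℓ => β ℓ ^ 2 = γ), β ℓ * cc ℓ) = 0 := by
    refine expsum_eq_zero s hspos _ ?_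
    refine Set.Infinite.mono ?_ hOinf
    intro m hm
    show ∑ γ ∈ s, _ * γ ^ m = 0
    rw [heq_odd m]
    exact hm
  -- extract the coefficient at ℓ0
  have hmem : β ℓ0 ^ 2 ∈ s := hmaps ℓ0 (Finset.mem_univ _)
  have hd := hd0 _ hmem
  have he := he0 _ hmem
  have hkey : β ℓ0 * (∑ ℓ ∈ Finset.univ.filter (fun ℓ => β ℓ ^ 2 = β ℓ0 ^ 2), cc ℓ)
      + (∑ ℓ ∈ Finset.univ.filter (fun ℓ => β ℓ ^ 2 = β ℓ0 ^ 2), β ℓ * cc ℓ)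
      = 2 * β ℓ0 * cc ℓ0 := by
    rw [Finset.mul_sum, ← Finset.sum_add_distrib]
    have hz : ∀ ℓ ∈ Finset.univ.filter (fun ℓ => β ℓ ^ 2 = β ℓ0 ^ 2), ℓ ≠ ℓ0 →
        β ℓ0 * cc ℓ + β ℓ * cc ℓ = 0 := by
      intro ℓ hℓ hne
      have hsq : β ℓ ^ 2 = β ℓ0 ^ 2 := (Finset.mem_filter.mp hℓ).2
      have hneg : β ℓ = -β ℓ0 := by
        rcases sq_eq_sq_iff_eq_or_eq_neg.mp hsq with h' | h'
        · exact absurd (hβinj h') hne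
        · exact h'
      rw [hneg]; ring
    rw [Finset.sum_eq_single_of_mem
      (s := Finset.univ.filter (fun ℓ => β ℓ ^ 2 = β ℓ0 ^ 2))
      (f := fun ℓ => β ℓ0 * cc ℓ + β ℓ * cc ℓ) ℓ0
      (Finset.mem_filter.mpr ⟨Finset.mem_univ _, rfl⟩) hz]
    ring
  have hzero : 2 * β ℓ0 * cc ℓ0 = 0 := by rw [← hkey, hd, he]; ring
  have h2β : (2 : ℝ) * β ℓ0 ≠ 0 := mul_ne_zero two_ne_zero (hβ0 ℓ0)
  have := (mul_eq_zero.mp hzero).resolve_left h2β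
  simpa [hcc] using this
end

section
/- Let σ : ℝ → ℝ be a C^∞ function with σ(0) ≠ 0 such that σ^{(n)}(0) ≠ 0 for infinitely many even n and for infinitely many odd n. Let d ≥ 1, let W_1,…,W_M ∈ ℝ^d be pairwise distinct nonzero vectors, let A_1,…,A_M ∈ ℝ^{d_out}, and let c ∈ ℝ^{d_out}. If Σ_{j=1}^M A_j σ(W_j · x) = c for all x ∈ ℝ^d, then A_j = 0 for all j ∈ [M]. -/
open Filter Topology

private lemma lim_eq_zero {C : ℝ} {S : Set ℕ} (hS : S.Infinite) {g : ℕ → ℝ}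
    (hg : Tendsto g atTop (𝓝 0)) (h : ∀ n ∈ S, C = g n) : C = 0 := by
  by_contra hC
  have h1 : ∀ᶠ n in atTop, |g n| < |C| := by
    have := hg (Metric.ball_mem_nhds 0 (abs_pos.mpr hC))
    simpa [Real.dist_eq, Metric.mem_ball] using this
  obtain ⟨N, hN⟩ := eventually_atTop.mp h1
  obtain ⟨n, hnS, hn⟩ := hS.exists_gt N
  have := hN n hn.le
  rw [← h n hnS] at this
  exact lt_irrefl _ this

private lemma iteratedDeriv_const'' (n : ℕ) (c : ℝ) :
    iteratedDeriv n (fun _ : ℝ => c) = fun _ => if n = 0 then c else 0 := by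
  induction n with
  | zero => simp [iteratedDeriv_zero]
  | succ m ih =>
    rw [iteratedDeriv_succ, ih]
    by_cases hm : m = 0 <;> simp [hm]

private lemma iteratedDeriv_fun_sum' {ι : Type*} (u : Finset ι) (f : ι → ℝ → ℝ) {n : ℕ}
    (h : ∀ i ∈ u, ContDiff ℝ n (f i)) (x : ℝ) :
    iteratedDeriv n (fun y => ∑ i ∈ u, f i y) x = ∑ i ∈ u, iteratedDeriv n (f i) x := by
  simp only [iteratedDeriv_eq_iteratedFDeriv]
  rw [show (fun y => ∑ i ∈ u, f i y) = (∑ i ∈ u, f i ·) from rfl, iteratedFDeriv_sum h]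
  simp

private lemma iteratedDeriv_mul_const' {n : ℕ} {f : ℝ → ℝ} (hf : ContDiff ℝ n f) (b x : ℝ) :
    iteratedDeriv n (fun y => b * f y) x = b * iteratedDeriv n f x := by
  simp only [← iteratedDerivWithin_univ]
  exact iteratedDerivWithin_const_mul (Set.mem_univ x) uniqueDiffOn_univ b hf.contDiffWithinAt

private lemma vdm_one_dim {M : ℕ} (a : Fin M → ℝ) (ha0 : ∀ j, a j ≠ 0)
    (hainj : Function.Injective a) (B : Fin M → ℝ)
    (E O : Set ℕ) (hE : E.Infinite) (hO : O.Infinite)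
    (hEe : ∀ n ∈ E, Even n) (hOo : ∀ n ∈ O, Odd n)
    (heqE : ∀ n ∈ E, ∑ j, B j * a j ^ n = 0)
    (heqO : ∀ n ∈ O, ∑ j, B j * a j ^ n = 0) :
    ∀ j, B j = 0 := by
  by_contra hcon
  push_neg at hcon
  obtain ⟨j0, hj0⟩ := hcon
  set s' : Finset (Fin M) := Finset.univ.filter (fun j => B j ≠ 0) with hs'
  have hne : s'.Nonempty := ⟨j0, by simp [hs', hj0]⟩
  set r : ℝ := s'.sup' hne (fun j => |a j|) with hr
  obtain ⟨j1, hj1s, hj1r⟩ := Finset.exists_mem_eq_sup' hne (fun j => |a j|)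
  have hrle : ∀ j ∈ s', |a j| ≤ r := fun j hj => Finset.le_sup' (fun j => |a j|) hj
  have hrpos : 0 < r := by
    rw [hr, hj1r]
    exact abs_pos.mpr (ha0 j1)
  have hsum : ∀ n : ℕ, ∑ j ∈ s', B j * a j ^ n = ∑ j, B j * a j ^ n := by
    intro n
    apply Finset.sum_filter_of_ne
    intro j _ hBj hB0
    exact hBj (by rw [hB0, zero_mul])
  set t : Finset (Fin M) := s'.filter (fun j => |a j| = r) with ht
  have hj1t : j1 ∈ t := by simp [ht, hj1s, hj1r.symm, hr]
  set g : ℕ → ℝ := fun n => -(∑ j ∈ s'.filter (fun j => ¬ |a j| = r), B j * a j ^ n) / r ^ n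
    with hg
  have hgtend : Tendsto g atTop (𝓝 0) := by
    have : g = fun n => ∑ j ∈ s'.filter (fun j => ¬ |a j| = r), -(B j * (a j / r) ^ n) := by
      funext n
      simp only [hg]
      rw [neg_div, Finset.sum_div, ← Finset.sum_neg_distrib]
      apply Finset.sum_congr rfl
      intro j _
      rw [div_pow, mul_div_assoc]
    rw [this]
    have h0 : (0 : ℝ) = ∑ j ∈ s'.filter (fun j => ¬ |a j| = r), (0:ℝ) := by simp
    rw [h0]
    apply tendsto_finset_sum
    intro j hj
    simp only [Finset.mem_filter] at hj
    have habs : |a j / r| < 1 := by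
      rw [abs_div, abs_of_pos hrpos, div_lt_one hrpos]
      exact lt_of_le_of_ne (hrle j hj.1) hj.2
    have := (tendsto_pow_atTop_nhds_zero_of_abs_lt_one habs).const_mul (B j)
    simpa using this.neg
  have hsplit : ∀ n : ℕ, (∑ j ∈ t, B j * a j ^ n)
      + ∑ j ∈ s'.filter (fun j => ¬ |a j| = r), B j * a j ^ n = ∑ j, B j * a j ^ n := by
    intro n
    rw [← hsum n, ht]
    exact Finset.sum_filter_add_sum_filter_not s' _ _
  have hD : (∑ j ∈ t, B j) = 0 := by
    apply lim_eq_zero hE hgtend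
    intro n hn
    have key := heqE n hn
    have htop : ∑ j ∈ t, B j * a j ^ n = (∑ j ∈ t, B j) * r ^ n := by
      rw [Finset.sum_mul]
      apply Finset.sum_congr rfl
      intro j hj
      simp only [ht, Finset.mem_filter] at hj
      rw [← (hEe n hn).pow_abs (a j), hj.2]
    have := hsplit n
    rw [htop, key] at this
    simp only [hg]
    rw [eq_div_iff (by positivity : (r:ℝ) ^ n ≠ 0)]
    linarith
  have hD' : (∑ j ∈ t, (if a j = r then B j else -B j)) = 0 := by
    apply lim_eq_zero hO hgtend
    intro n hn
    have key := heqO n hn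
    have htop : ∑ j ∈ t, B j * a j ^ n
        = (∑ j ∈ t, (if a j = r then B j else -B j)) * r ^ n := by
      rw [Finset.sum_mul]
      apply Finset.sum_congr rfl
      intro j hj
      simp only [ht, Finset.mem_filter] at hj
      rcases (abs_eq hrpos.le).mp hj.2 with h1 | h1
      · rw [if_pos h1, h1]
      · rw [if_neg (by rw [h1]; intro hh; nlinarith), h1, (hOo n hn).neg_pow]
        ring
    have := hsplit n
    rw [htop, key] at this
    simp only [hg]
    rw [eq_div_iff (by positivity : (r:ℝ) ^ n ≠ 0)]
    linarith
  have hDsplit : (∑ j ∈ t.filter (fun j => a j = r), B j)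
      + ∑ j ∈ t.filter (fun j => ¬ a j = r), B j = ∑ j ∈ t, B j :=
    Finset.sum_filter_add_sum_filter_not t _ _
  have hD'split : (∑ j ∈ t.filter (fun j => a j = r), B j)
      - ∑ j ∈ t.filter (fun j => ¬ a j = r), B j
      = ∑ j ∈ t, (if a j = r then B j else -B j) := by
    rw [← Finset.sum_filter_add_sum_filter_not t (fun j => a j = r)
      (fun j => (if a j = r then B j else -B j))]
    rw [Finset.sum_congr rfl (fun j hj => if_pos (Finset.mem_filter.mp hj).2),
      Finset.sum_congr rfl (fun j hj => if_neg (Finset.mem_filter.mp hj).2)]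
    rw [Finset.sum_neg_distrib]
    ring
  have hSr : (∑ j ∈ t.filter (fun j => a j = r), B j) = 0 := by
    rw [hD] at hDsplit; rw [hD'] at hD'split; linarith
  have hSn : (∑ j ∈ t.filter (fun j => ¬ a j = r), B j) = 0 := by
    rw [hD] at hDsplit; rw [hD'] at hD'split; linarith
  have hj1B : B j1 ≠ 0 := (Finset.mem_filter.mp hj1s).2
  rcases (abs_eq hrpos.le).mp hj1r.symm with h1 | h1
  · have hsing : t.filter (fun j => a j = r) = {j1} := by
      ext j
      simp only [Finset.mem_filter, Finset.mem_singleton]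
      constructor
      · rintro ⟨_, hj⟩
        exact hainj (by rw [hj, h1])
      · rintro rfl
        exact ⟨hj1t, h1⟩
    rw [hsing, Finset.sum_singleton] at hSr
    exact hj1B hSr
  · have hner : ¬ a j1 = r := by rw [h1]; intro hh; nlinarith
    have hsing : t.filter (fun j => ¬ a j = r) = {j1} := by
      ext j
      simp only [Finset.mem_filter, Finset.mem_singleton]
      constructor
      · rintro ⟨hjt, hj⟩
        have : a j = -r := by
          rcases (abs_eq hrpos.le).mp (Finset.mem_filter.mp hjt).2 with h2 | h2
          · exact absurd h2 hj
          · exact h2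
        exact hainj (by rw [this, h1])
      · rintro rfl
        exact ⟨hj1t, hner⟩
    rw [hsing, Finset.sum_singleton] at hSn
    exact hj1B hSn

/-- Let `σ : ℝ → ℝ` be `C^∞` with `σ 0 ≠ 0` and with
`σ⁽ⁿ⁾(0) ≠ 0` for infinitely many even `n` and infinitely many odd `n`
(Assumption A). Let `d ≥ 1`, let `W₁, …, W_M ∈ ℝ^d` be pairwise distinct nonzero
vectors, `A₁, …, A_M ∈ ℝ^{d_out}`, `c ∈ ℝ^{d_out}`. If
`∑ j, σ(W_j · x) • A_j = c` for all `x ∈ ℝ^d`, then all `A_j = 0`. -/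
theorem vandermonde_lemma_multidim
    {dout : ℕ} (d M : ℕ) (hd : 1 ≤ d)
    (σ : ℝ → ℝ)
    (hσ : ContDiff ℝ (⊤ : ℕ∞) σ) (hσ0 : σ 0 ≠ 0)
    (heven : {n : ℕ | Even n ∧ iteratedDeriv n σ 0 ≠ 0}.Infinite)
    (hodd : {n : ℕ | Odd n ∧ iteratedDeriv n σ 0 ≠ 0}.Infinite)
    (W : Fin M → Fin d → ℝ) (hWinj : Function.Injective W) (hW0 : ∀ j, W j ≠ 0)
    (A : Fin M → Fin dout → ℝ) (c : Fin dout → ℝ)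
    (h : ∀ x : Fin d → ℝ, ∑ j, σ (∑ i, W j i * x i) • A j = c) :
    ∀ j, A j = 0 := by
  classical
  -- the polynomial attached to a vector `u`
  let p : (Fin d → ℝ) → Polynomial ℝ :=
    fun u => ∑ i : Fin d, Polynomial.C (u i) * Polynomial.X ^ (i : ℕ)
  have hcoeff : ∀ u : Fin d → ℝ, ∀ i0 : Fin d, (p u).coeff (i0 : ℕ) = u i0 := by
    intro u i0
    simp only [p, Polynomial.finset_sum_coeff, Polynomial.coeff_C_mul, Polynomial.coeff_X_pow,
      mul_ite, mul_one, mul_zero, Fin.val_eq_val]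
    simp [Finset.sum_ite_eq]
  have hpne : ∀ u : Fin d → ℝ, u ≠ 0 → p u ≠ 0 := by
    intro u hu hz
    apply hu
    funext i
    have := hcoeff u i
    rw [hz] at this
    simpa using this.symm
  have heval : ∀ (u : Fin d → ℝ) (ε : ℝ), (p u).eval ε = ∑ i, u i * ε ^ (i : ℕ) := by
    intro u ε
    simp [p, Polynomial.eval_finset_sum]
  -- a master polynomial whose non-vanishing gives a good direction
  set q : Polynomial ℝ := (∏ j : Fin M, p (W j)) *
    ∏ pr ∈ (Finset.univ : Finset (Fin M)).offDiag, p (W pr.1 - W pr.2) with hq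
  have hqne : q ≠ 0 := by
    apply mul_ne_zero
    · exact Finset.prod_ne_zero_iff.mpr fun j _ => hpne _ (hW0 j)
    · refine Finset.prod_ne_zero_iff.mpr fun pr hpr => hpne _ ?_
      exact sub_ne_zero.mpr fun hh => (Finset.mem_offDiag.mp hpr).2.2 (hWinj hh)
  obtain ⟨ε, hε⟩ := q.exists_eval_ne_zero_of_natDegree_lt_card hqne
    (lt_of_lt_of_le (Cardinal.nat_lt_aleph0 _) (Cardinal.infinite_iff.mp inferInstance))
  rw [hq, Polynomial.eval_mul] at hε
  obtain ⟨hε1, hε2⟩ := mul_ne_zero_iff.mp hε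
  rw [Polynomial.eval_prod] at hε1
  rw [Polynomial.eval_prod] at hε2
  -- the slopes
  set a : Fin M → ℝ := fun j => (p (W j)).eval ε with ha
  have haf : ∀ j, a j = ∑ i, W j i * ε ^ (i : ℕ) := fun j => heval (W j) ε
  have ha0 : ∀ j, a j ≠ 0 := fun j =>
    Finset.prod_ne_zero_iff.mp hε1 j (Finset.mem_univ j)
  have hainj : Function.Injective a := by
    intro i j hij
    by_contra hne
    have hmem : (i, j) ∈ (Finset.univ : Finset (Fin M)).offDiag :=
      Finset.mem_offDiag.mpr ⟨Finset.mem_univ i, Finset.mem_univ j, hne⟩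
    apply Finset.prod_ne_zero_iff.mp hε2 (i, j) hmem
    rw [heval]
    have : ∑ k, (W i - W j) k * ε ^ (k : ℕ) = a i - a j := by
      rw [haf, haf, ← Finset.sum_sub_distrib]
      apply Finset.sum_congr rfl
      intro k _
      simp [Pi.sub_apply, sub_mul]
    rw [this, hij, sub_self]
  -- fix an output coordinate
  intro j
  funext k
  show A j k = (0 : Fin dout → ℝ) k
  rw [Pi.zero_apply]
  set B : Fin M → ℝ := fun j => A j k with hB
  have hline : ∀ t : ℝ, ∑ j, B j * σ (a j * t) = c k := by
    intro t
    have hx := congrFun (h (fun i => t * ε ^ (i : ℕ))) k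
    simp only [Finset.sum_apply, Pi.smul_apply, smul_eq_mul] at hx
    rw [← hx]
    apply Finset.sum_congr rfl
    intro j' _
    rw [mul_comm]
    congr 2
    rw [haf, Finset.sum_mul]
    apply Finset.sum_congr rfl
    intro i _
    ring
  have hderiv : ∀ n : ℕ, 1 ≤ n → (∑ j, B j * a j ^ n) * iteratedDeriv n σ 0 = 0 := by
    intro n hn
    have hcσ : ContDiff ℝ n σ := hσ.of_le (by exact_mod_cast le_top)
    have hci : ∀ j' : Fin M, ContDiff ℝ n (fun t : ℝ => σ (a j' * t)) := by
      intro j'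
      exact hcσ.comp (contDiff_const.mul contDiff_id)
    have h1 : iteratedDeriv n (fun t => ∑ j', B j' * σ (a j' * t)) 0
        = ∑ j', B j' * (a j' ^ n * iteratedDeriv n σ (a j' * 0)) := by
      rw [iteratedDeriv_fun_sum' Finset.univ _ (fun j' _ => (contDiff_const.mul (hci j'))) 0]
      apply Finset.sum_congr rfl
      intro j' _
      rw [iteratedDeriv_mul_const' (hci j')]
      congr 1
      rw [iteratedDeriv_comp_const_mul hcσ (a j')]
    have h2 : (fun t : ℝ => ∑ j', B j' * σ (a j' * t)) = fun _ : ℝ => c k := funext hline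
    rw [h2] at h1
    simp only [iteratedDeriv_const''] at h1
    rw [if_neg (by omega)] at h1
    rw [Finset.sum_mul]
    rw [show ∑ j', B j' * a j' ^ n * iteratedDeriv n σ 0
        = ∑ j', B j' * (a j' ^ n * iteratedDeriv n σ (a j' * 0)) from
      Finset.sum_congr rfl fun j' _ => by rw [mul_zero]; ring]
    exact h1.symm
  -- the even and odd exponent sets
  set E : Set ℕ := {n : ℕ | Even n ∧ iteratedDeriv n σ 0 ≠ 0} \ {0} with hE
  set O : Set ℕ := {n : ℕ | Odd n ∧ iteratedDeriv n σ 0 ≠ 0} \ {0} with hO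
  have hEinf : E.Infinite := heven.diff (Set.finite_singleton 0)
  have hOinf : O.Infinite := hodd.diff (Set.finite_singleton 0)
  have heqE : ∀ n ∈ E, ∑ j', B j' * a j' ^ n = 0 := by
    intro n hn
    obtain ⟨⟨he, hDn⟩, h0⟩ := hn
    have h0' : n ≠ 0 := by simpa using h0
    rcases mul_eq_zero.mp (hderiv n (Nat.one_le_iff_ne_zero.mpr h0')) with hh | hh
    · exact hh
    · exact absurd hh hDn
  have heqO : ∀ n ∈ O, ∑ j', B j' * a j' ^ n = 0 := by
    intro n hn
    obtain ⟨⟨he, hDn⟩, h0⟩ := hn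
    have h0' : n ≠ 0 := by simpa using h0
    rcases mul_eq_zero.mp (hderiv n (Nat.one_le_iff_ne_zero.mpr h0')) with hh | hh
    · exact hh
    · exact absurd hh hDn
  exact vdm_one_dim a ha0 hainj B E O hEinf hOinf
    (fun n hn => hn.1.1) (fun n hn => hn.1.1) heqE heqO j
end

section
/- Let σ : ℝ → ℝ satisfy Assumption A (σ is C^∞, σ(0) ≠ 0, and σ^{(n)}(0) ≠ 0 for infinitely many even and infinitely many odd n). Let θ* = (w_1*,…,w_{r*}*, a_1*,…,a_{r*}*) be an irreducible r*-neuron point and let θ = (w_1,…,w_m, a_1,…,a_m) be an m-neuron point with m > r*. If the two network functions agree everywhere, i.e. Σ_{j=1}^m a_j σ(w_j · x) = Σ_{j=1}^{r*} a_j* σ(w_j* · x) for all x ∈ ℝ^{d_in}, then θ belongs to the expansion manifold Θ_{r*→m}(θ*). -/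
open MeasureTheory

lemma aux_zero (S : Set ℕ) (hS : S.Infinite) (M ρ C d : ℝ) (hM : 0 < M)
    (hρ : 0 ≤ ρ) (hρM : ρ < M) (h : ∀ n ∈ S, |d| * M ^ n ≤ C * ρ ^ n) : d = 0 := by
  by_contra hd
  have hd' : 0 < |d| := abs_pos.mpr hd
  have hlim : Filter.Tendsto (fun n : ℕ => C * (ρ / M) ^ n) Filter.atTop (nhds 0) := by
    have : |ρ / M| < 1 := by
      rw [abs_of_nonneg (div_nonneg hρ hM.le)]
      exact (div_lt_one hM).mpr hρM
    simpa using (tendsto_pow_atTop_nhds_zero_of_abs_lt_one this).const_mul C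
  obtain ⟨N, hN⟩ := (Filter.eventually_atTop).mp (hlim.eventually (gt_mem_nhds hd'))
  obtain ⟨n, hnS, hnN⟩ := hS.exists_gt N  -- maybe wrong name
  have hMn : (0:ℝ) < M ^ n := pow_pos hM n
  have h1 : |d| ≤ C * (ρ / M) ^ n := by
    have := h n hnS
    rw [div_pow, ← mul_div_assoc, le_div_iff₀ hMn]
    linarith [this]
  have := hN n (le_of_lt hnN)
  linarith

lemma exists_generic {din : ℕ} (V : Finset (Fin din → ℝ)) :
    ∃ u : Fin din → ℝ, Set.InjOn (fun v : Fin din → ℝ => ∑ k, v k * u k) (V : Set (Fin din → ℝ)) := by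
  classical
  have key : ∀ d : Fin din → ℝ, d ≠ 0 → volume {u : Fin din → ℝ | ∑ k, d k * u k = 0} = 0 := by
    intro d hd
    set L : (Fin din → ℝ) →ₗ[ℝ] ℝ := ∑ k, d k • LinearMap.proj k with hL
    have hLa : ∀ u, L u = ∑ k, d k * u k := by
      intro u; simp [hL, LinearMap.sum_apply]
    have : {u : Fin din → ℝ | ∑ k, d k * u k = 0} = (LinearMap.ker L : Set (Fin din → ℝ)) := by
      ext u; simp [LinearMap.mem_ker, hLa]
    rw [this]
    apply Measure.addHaar_submodule
    intro htop
    apply hd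
    have hLd : L d = 0 := by
      have : d ∈ LinearMap.ker L := htop ▸ Submodule.mem_top
      simpa using this
    rw [hLa] at hLd
    have : ∑ k, d k * d k = 0 := hLd
    funext k
    have := (Finset.sum_eq_zero_iff_of_nonneg (fun k _ => mul_self_nonneg (d k))).mp this k (Finset.mem_univ k)
    simpa [mul_self_eq_zero] using this
  set B : Set (Fin din → ℝ) :=
    ⋃ p ∈ ((V ×ˢ V : Finset _) : Set ((Fin din → ℝ) × (Fin din → ℝ))) ∩ {p | p.1 ≠ p.2},
      {u : Fin din → ℝ | ∑ k, (p.1 k - p.2 k) * u k = 0} with hB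
  have hBnull : volume B = 0 := by
    rw [hB]
    refine (measure_biUnion_null_iff ?_).mpr ?_
    · exact (((V ×ˢ V : Finset _) : Set ((Fin din → ℝ) × (Fin din → ℝ))).toFinite.inter_of_left _).countable
    · rintro ⟨v, v'⟩ ⟨-, hne⟩
      exact key _ (sub_ne_zero.mpr hne)
  have hBne : B ≠ Set.univ := by
    intro hB'
    have : (volume : Measure (Fin din → ℝ)) Set.univ = 0 := by rw [← hB']; exact hBnull
    have hpos : 0 < (volume : Measure (Fin din → ℝ)) Set.univ :=
      IsOpen.measure_pos volume isOpen_univ ⟨0, trivial⟩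
    simp [this] at hpos
  obtain ⟨u, hu⟩ := (Set.ne_univ_iff_exists_notMem B).mp hBne
  refine ⟨u, fun v hv v' hv' hEq => ?_⟩
  by_contra hne
  apply hu
  rw [hB]
  refine Set.mem_biUnion (x := (v, v')) ⟨Finset.mem_coe.mpr (Finset.mem_product.mpr ⟨hv, hv'⟩), hne⟩ ?_
  simp only [Set.mem_setOf_eq, sub_mul, Finset.sum_sub_distrib]
  simp only at hEq
  rw [hEq]; ring


lemma iteratedDeriv_zero_fun' (n : ℕ) : iteratedDeriv n (fun _ : ℝ => (0:ℝ)) = fun _ => 0 := by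
  induction n with
  | zero => simp
  | succ n ih => rw [iteratedDeriv_succ', show deriv (fun _ : ℝ => (0:ℝ)) = fun _ => (0:ℝ) from funext fun x => deriv_const x 0, ih]

lemma iteratedDeriv_finset_sum {ι : Type*} (s : Finset ι) (f : ι → ℝ → ℝ) (n : ℕ)
    (hf : ∀ i ∈ s, ContDiff ℝ n (f i)) :
    iteratedDeriv n (fun x => ∑ i ∈ s, f i x) = fun x => ∑ i ∈ s, iteratedDeriv n (f i) x := by
  classical
  induction s using Finset.induction with
  | empty => simpa using iteratedDeriv_zero_fun' n
  | @insert j s' hni ih =>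
    funext x
    rw [Finset.sum_insert hni]
    have h1 : ContDiff ℝ n (f j) := hf j (Finset.mem_insert_self j s')
    have h2 : ContDiff ℝ n (fun x => ∑ i ∈ s', f i x) :=
      ContDiff.sum fun i hi => hf i (Finset.mem_insert_of_mem hi)
    have : iteratedDeriv n (fun x => f j x + ∑ i ∈ s', f i x) x
        = iteratedDeriv n (f j) x + iteratedDeriv n (fun x => ∑ i ∈ s', f i x) x := by
      rw [← iteratedDerivWithin_univ, ← iteratedDerivWithin_univ, ← iteratedDerivWithin_univ]
      exact iteratedDerivWithin_add (Set.mem_univ x) uniqueDiffOn_univ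
        h1.contDiffWithinAt h2.contDiffWithinAt
    rw [show (fun x => ∑ i ∈ insert j s', f i x) = fun x => f j x + ∑ i ∈ s', f i x from
      funext fun x => Finset.sum_insert hni, this, ih fun i hi => hf i (Finset.mem_insert_of_mem hi)]

lemma deriv_moments (σ : ℝ → ℝ) (hσ : ContDiff ℝ (⊤ : ℕ∞) σ) (s : Finset ℝ) (c : ℝ → ℝ)
    (h : ∀ x : ℝ, ∑ μ ∈ s, c μ * σ (μ * x) = 0) (n : ℕ) :
    (∑ μ ∈ s, c μ * μ ^ n) * iteratedDeriv n σ 0 = 0 := by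
  have hσn : ContDiff ℝ n σ := hσ.of_le (by exact_mod_cast le_top)
  have hterm : ∀ μ : ℝ, ContDiff ℝ n (fun x => c μ * σ (μ * x)) := fun μ =>
    contDiff_const.mul (hσn.comp ((contDiff_const (c := μ)).mul contDiff_id))
  have h0 : iteratedDeriv n (fun x => ∑ μ ∈ s, c μ * σ (μ * x)) = fun _ => 0 := by
    rw [show (fun x => ∑ μ ∈ s, c μ * σ (μ * x)) = fun _ : ℝ => (0:ℝ) from funext h]
    exact iteratedDeriv_zero_fun' n
  have h1 : iteratedDeriv n (fun x => ∑ μ ∈ s, c μ * σ (μ * x)) 0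
      = ∑ μ ∈ s, c μ * (μ ^ n * iteratedDeriv n σ 0) := by
    rw [iteratedDeriv_finset_sum s _ n fun μ _ => hterm μ]
    refine Finset.sum_congr rfl fun μ _ => ?_
    have hc : iteratedDeriv n (fun x => c μ * σ (μ * x)) 0
        = c μ * iteratedDeriv n (fun x => σ (μ * x)) 0 := by
      rw [← iteratedDerivWithin_univ, ← iteratedDerivWithin_univ]
      exact iteratedDerivWithin_const_mul (Set.mem_univ 0) uniqueDiffOn_univ (c μ)
        (hσn.comp ((contDiff_const (c := μ)).mul contDiff_id)).contDiffWithinAt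
    rw [hc, iteratedDeriv_comp_const_mul hσn μ]
    norm_num
  have := h1.symm.trans (congrFun h0 0)
  calc (∑ μ ∈ s, c μ * μ ^ n) * iteratedDeriv n σ 0
      = ∑ μ ∈ s, c μ * (μ ^ n * iteratedDeriv n σ 0) := by
        rw [Finset.sum_mul]; exact Finset.sum_congr rfl fun μ _ => by ring
    _ = 0 := this


lemma vanish : ∀ (N : ℕ) (s : Finset ℝ) (c : ℝ → ℝ), s.card ≤ N →
    (∀ μ, μ ∉ s → c μ = 0) →
    ∀ (Se So : Set ℕ), Se.Infinite → So.Infinite →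
    (∀ n ∈ Se, Even n) → (∀ n ∈ So, Odd n) →
    (∑ μ ∈ s, c μ = 0) →
    (∀ n ∈ Se, ∑ μ ∈ s, c μ * μ ^ n = 0) →
    (∀ n ∈ So, ∑ μ ∈ s, c μ * μ ^ n = 0) →
    ∀ μ, c μ = 0 := by
  intro N
  induction N with
  | zero =>
    intro s c hcard hc _ _ _ _ _ _ _ _ _ μ
    exact hc μ (by simp [Finset.card_eq_zero.mp (Nat.le_zero.mp hcard)])
  | succ N ih =>
    intro s c hcard hc Se So hSe hSo hSeE hSoO h0 he ho
    rcases s.eq_empty_or_nonempty with rfl | hne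
    · intro μ; exact hc μ (by simp)
    classical
    set M := s.sup' hne (fun μ => |μ|) with hMdef
    obtain ⟨μ0, hμ0s, hμ0⟩ := s.exists_mem_eq_sup' hne (fun μ => |μ|)
    have hMnonneg : 0 ≤ M := by rw [hMdef, hμ0]; exact abs_nonneg μ0
    have habs_le : ∀ μ ∈ s, |μ| ≤ M := fun μ hμ => Finset.le_sup' _ hμ
    rcases eq_or_lt_of_le hMnonneg with hM0 | hMpos
    · -- all elements are 0, so s = {0}
      have hs0 : ∀ μ ∈ s, μ = 0 := fun μ hμ =>
        abs_eq_zero.mp (le_antisymm (hM0 ▸ habs_le μ hμ) (abs_nonneg μ))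
      have hseq : s = {0} := by
        apply Finset.eq_singleton_iff_nonempty_unique_mem.mpr ⟨hne, hs0⟩
      intro μ
      by_cases hμ : μ ∈ s
      · rw [hs0 μ hμ]
        have := h0
        rw [hseq, Finset.sum_singleton] at this
        exact this
      · exact hc μ hμ
    · -- main case : M > 0
      have hMne : M ≠ -M := by intro hcon; nlinarith [hcon]
      set s'' : Finset ℝ := insert M (insert (-M) s) with hs''def
      have hsub : s ⊆ s'' := fun μ hμ => by simp [hs''def, hμ]
      have hMmem : M ∈ s'' := Finset.mem_insert_self _ _
      have hnegMmem : -M ∈ s'' := by simp [hs''def]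
      set t : Finset ℝ := (s''.erase M).erase (-M) with htdef
      have hts : ∀ μ ∈ t, μ ∈ s ∧ μ ≠ M ∧ μ ≠ -M := by
        intro μ hμ
        have h1 := Finset.mem_of_mem_erase hμ
        have hne2 : μ ≠ -M := Finset.ne_of_mem_erase hμ
        have hne1 : μ ≠ M := Finset.ne_of_mem_erase h1
        have h2 := Finset.mem_of_mem_erase h1
        rw [hs''def] at h2
        simp only [Finset.mem_insert] at h2
        rcases h2 with h2 | h2 | h2
        · exact absurd h2 hne1
        · exact absurd h2 hne2
        · exact ⟨h2, hne1, hne2⟩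
      -- sum decomposition
      have hdec : ∀ g : ℝ → ℝ, ∑ μ ∈ s, c μ * g μ
          = c M * g M + c (-M) * g (-M) + ∑ μ ∈ t, c μ * g μ := by
        intro g
        have hext : ∑ μ ∈ s, c μ * g μ = ∑ μ ∈ s'', c μ * g μ := by
          apply Finset.sum_subset hsub
          intro μ _ hμs
          rw [hc μ hμs, zero_mul]
        have e1 : ∑ μ ∈ s'', c μ * g μ
            = c M * g M + ∑ μ ∈ s''.erase M, c μ * g μ :=
          (Finset.add_sum_erase _ _ hMmem).symm
        have hnegM' : -M ∈ s''.erase M := Finset.mem_erase.mpr ⟨Ne.symm hMne, hnegMmem⟩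
        have e2 : ∑ μ ∈ s''.erase M, c μ * g μ
            = c (-M) * g (-M) + ∑ μ ∈ t, c μ * g μ :=
          (Finset.add_sum_erase _ _ hnegM').symm
        rw [hext, e1, e2]; ring
      -- the bound ρ
      set ρset := insert (0:ℝ) (t.image abs) with hρsetdef
      have hρsetne : ρset.Nonempty := ⟨0, Finset.mem_insert_self _ _⟩
      set ρ := ρset.max' hρsetne with hρdef
      have hρ0 : 0 ≤ ρ := Finset.le_max' _ _ (Finset.mem_insert_self _ _)
      have hρM : ρ < M := by
        apply Finset.max'_lt_iff _ hρsetne |>.mpr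
        intro y hy
        rw [hρsetdef] at hy
        simp only [Finset.mem_insert, Finset.mem_image] at hy
        rcases hy with rfl | ⟨μ, hμ, rfl⟩
        · exact hMpos
        · obtain ⟨hμs, hne1, hne2⟩ := hts μ hμ
          rcases lt_or_eq_of_le (habs_le μ hμs) with h | h
          · exact h
          · exfalso
            rcases abs_eq hMnonneg |>.mp h with h | h
            · exact hne1 h
            · exact hne2 h
      have hbound : ∀ μ ∈ t, |μ| ≤ ρ := fun μ hμ =>
        Finset.le_max' _ _ (Finset.mem_insert_of_mem (Finset.mem_image_of_mem abs hμ))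
      set C := ∑ μ ∈ t, |c μ| with hCdef
      have hrest : ∀ n : ℕ, |∑ μ ∈ t, c μ * μ ^ n| ≤ C * ρ ^ n := by
        intro n
        calc |∑ μ ∈ t, c μ * μ ^ n| ≤ ∑ μ ∈ t, |c μ * μ ^ n| := Finset.abs_sum_le_sum_abs _ _
          _ ≤ ∑ μ ∈ t, |c μ| * ρ ^ n := by
              apply Finset.sum_le_sum
              intro μ hμ
              rw [abs_mul, abs_pow]
              exact mul_le_mul_of_nonneg_left
                (pow_le_pow_left₀ (abs_nonneg μ) (hbound μ hμ) n) (abs_nonneg _)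
          _ = C * ρ ^ n := by rw [hCdef, Finset.sum_mul]
      -- c M + c (-M) = 0 via even exponents
      have hplus : c M + c (-M) = 0 := by
        apply aux_zero Se hSe M ρ C _ hMpos hρ0 hρM
        intro n hn
        have heq := he n hn
        rw [hdec (fun μ => μ ^ n)] at heq
        rw [(hSeE n hn).neg_pow M] at heq
        have : (c M + c (-M)) * M ^ n = -∑ μ ∈ t, c μ * μ ^ n := by linarith
        calc |c M + c (-M)| * M ^ n = |(c M + c (-M)) * M ^ n| := by
              rw [abs_mul, abs_of_nonneg (pow_nonneg hMpos.le n)]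
          _ = |∑ μ ∈ t, c μ * μ ^ n| := by rw [this, abs_neg]
          _ ≤ C * ρ ^ n := hrest n
      have hminus : c M - c (-M) = 0 := by
        apply aux_zero So hSo M ρ C _ hMpos hρ0 hρM
        intro n hn
        have heq := ho n hn
        rw [hdec (fun μ => μ ^ n)] at heq
        rw [(hSoO n hn).neg_pow M] at heq
        have : (c M - c (-M)) * M ^ n = -∑ μ ∈ t, c μ * μ ^ n := by linarith
        calc |c M - c (-M)| * M ^ n = |(c M - c (-M)) * M ^ n| := by
              rw [abs_mul, abs_of_nonneg (pow_nonneg hMpos.le n)]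
          _ = |∑ μ ∈ t, c μ * μ ^ n| := by rw [this, abs_neg]
          _ ≤ C * ρ ^ n := hrest n
      have hcM : c M = 0 := by linarith
      have hcnegM : c (-M) = 0 := by linarith
      -- recurse on t
      have htsubs : t ⊆ s := fun μ hμ => (hts μ hμ).1
      have hμ0notin : μ0 ∉ t := by
        intro hcon
        obtain ⟨_, hne1, hne2⟩ := hts μ0 hcon
        rcases (abs_eq hMnonneg).mp hμ0.symm with h | h
        · exact hne1 h
        · exact hne2 h
      have hcardt : t.card ≤ N := by
        have h2 := Finset.card_lt_card (Finset.ssubset_iff_of_subset htsubs |>.mpr ⟨μ0, hμ0s, hμ0notin⟩)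
        omega
      have hct : ∀ μ, μ ∉ t → c μ = 0 := by
        intro μ hμ
        by_cases h1 : μ = M
        · rw [h1]; exact hcM
        by_cases h2 : μ = -M
        · rw [h2]; exact hcnegM
        by_cases h3 : μ ∈ s
        · exfalso; apply hμ
          rw [htdef]
          exact Finset.mem_erase.mpr ⟨h2, Finset.mem_erase.mpr ⟨h1, hsub h3⟩⟩
        · exact hc μ h3
      have hsum_t : ∀ g : ℝ → ℝ, ∑ μ ∈ s, c μ * g μ = ∑ μ ∈ t, c μ * g μ := by
        intro g
        rw [hdec g, hcM, hcnegM]; ring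
      apply ih t c hcardt hct Se So hSe hSo hSeE hSoO
      · have := h0
        have h1 : ∑ μ ∈ s, c μ * 1 = ∑ μ ∈ t, c μ * 1 := hsum_t 1
        simp only [mul_one] at h1
        rw [← h1]; exact this
      · intro n hn; rw [← hsum_t (fun μ => μ ^ n)]; exact he n hn
      · intro n hn; rw [← hsum_t (fun μ => μ ^ n)]; exact ho n hn



/-- The two-layer network function `f⁽²⁾(x | θ) = ∑ i, a_i σ(w_i · x)`. -/
def net {din dout m : ℕ} (σ : ℝ → ℝ)
    (w : Fin m → Fin din → ℝ) (a : Fin m → Fin dout → ℝ)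
    (x : Fin din → ℝ) : Fin dout → ℝ :=
  fun o => ∑ i, a i o * σ (∑ k, w i k * x k)

/-- Let `σ` satisfy Assumption A (`σ` is `C^∞`, `σ 0 ≠ 0`, and the
`n`-th derivative of `σ` at `0` is nonzero for infinitely many even `n` and infinitely
many odd `n`). Let `θ* = (wr, ar)` be an irreducible `r*`-neuron point and `(w, a)` an
`m`-neuron point with `m > r*`. If the two network functions agree everywhere, then
`(w, a)` belongs to the expansion manifold `Θ_{r*→m}(θ*)`. -/
theorem mem_expansionManifold_of_net_eq
    {din dout rs m : ℕ} (hm : rs < m)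
    (σ : ℝ → ℝ) (hσ : ContDiff ℝ (⊤ : ℕ∞) σ) (hσ0 : σ 0 ≠ 0)
    (heven : {n : ℕ | Even n ∧ iteratedDeriv n σ 0 ≠ 0}.Infinite)
    (hodd : {n : ℕ | Odd n ∧ iteratedDeriv n σ 0 ≠ 0}.Infinite)
    (wr : Fin rs → Fin din → ℝ) (ar : Fin rs → Fin dout → ℝ)
    (hirr_w : Function.Injective wr) (hirr_a : ∀ t, ar t ≠ 0)
    (w : Fin m → Fin din → ℝ) (a : Fin m → Fin dout → ℝ)
    (heq : ∀ x : Fin din → ℝ, net σ w a x = net σ wr ar x) :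
    (w, a) ∈ expansionManifold rs m wr ar := by
  classical
  set V : Finset (Fin din → ℝ) := Finset.image w Finset.univ ∪ Finset.image wr Finset.univ
    with hV
  have hwV : ∀ i, w i ∈ V := fun i =>
    Finset.mem_union_left _ (Finset.mem_image_of_mem w (Finset.mem_univ i))
  have hwrV : ∀ t, wr t ∈ V := fun t =>
    Finset.mem_union_right _ (Finset.mem_image_of_mem wr (Finset.mem_univ t))
  set cc : (Fin din → ℝ) → Fin dout → ℝ := fun v o =>
    (∑ i ∈ Finset.univ.filter (fun i => w i = v), a i o)
    - ∑ t ∈ Finset.univ.filter (fun t => wr t = v), ar t o with hcc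
  have hnet : ∀ (o : Fin dout) (x : Fin din → ℝ),
      ∑ v ∈ V, cc v o * σ (∑ k, v k * x k) = 0 := by
    intro o x
    have h1 : ∑ v ∈ V, (∑ i ∈ Finset.univ.filter (fun i => w i = v), a i o)
          * σ (∑ k, v k * x k)
        = ∑ i, a i o * σ (∑ k, w i k * x k) := by
      rw [← Finset.sum_fiberwise_of_maps_to (fun i _ => hwV i)
        (fun i => a i o * σ (∑ k, w i k * x k))]
      refine Finset.sum_congr rfl fun v _ => ?_
      rw [Finset.sum_mul]
      refine Finset.sum_congr rfl fun i hi => ?_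
      rw [(Finset.mem_filter.mp hi).2]
    have h2 : ∑ v ∈ V, (∑ t ∈ Finset.univ.filter (fun t => wr t = v), ar t o)
          * σ (∑ k, v k * x k)
        = ∑ t, ar t o * σ (∑ k, wr t k * x k) := by
      rw [← Finset.sum_fiberwise_of_maps_to (fun t _ => hwrV t)
        (fun t => ar t o * σ (∑ k, wr t k * x k))]
      refine Finset.sum_congr rfl fun v _ => ?_
      rw [Finset.sum_mul]
      refine Finset.sum_congr rfl fun t ht => ?_
      rw [(Finset.mem_filter.mp ht).2]
    simp only [hcc, sub_mul, Finset.sum_sub_distrib, h1, h2]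
    have := congrFun (heq x) o
    simp only [net] at this
    rw [this, sub_self]
  obtain ⟨u, hu⟩ := exists_generic V
  set lam : (Fin din → ℝ) → ℝ := fun v => ∑ k, v k * u k with hlam
  have keyo : ∀ v ∈ V, ∀ o : Fin dout,
      (∑ i ∈ Finset.univ.filter (fun i => w i = v), a i o)
      = ∑ t ∈ Finset.univ.filter (fun t => wr t = v), ar t o := by
    intro v hv o
    set sR : Finset ℝ := V.image lam with hsR
    set cR : ℝ → ℝ := fun μ => ∑ v' ∈ V.filter (fun v' => lam v' = μ), cc v' o with hcR
    have hmaps : ∀ v' ∈ V, lam v' ∈ sR := fun v' hv' => Finset.mem_image_of_mem lam hv'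
    have hfib : ∀ g : ℝ → ℝ, ∑ μ ∈ sR, cR μ * g μ = ∑ v' ∈ V, cc v' o * g (lam v') := by
      intro g
      rw [← Finset.sum_fiberwise_of_maps_to hmaps (fun v' => cc v' o * g (lam v'))]
      refine Finset.sum_congr rfl fun μ _ => ?_
      rw [hcR, Finset.sum_mul]
      refine Finset.sum_congr rfl fun v' hv' => ?_
      rw [(Finset.mem_filter.mp hv').2]
    have hcRsupp : ∀ μ, μ ∉ sR → cR μ = 0 := by
      intro μ hμ
      rw [hcR]
      apply Finset.sum_eq_zero
      intro v' hv'
      exfalso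
      apply hμ
      rw [← (Finset.mem_filter.mp hv').2]
      exact hmaps v' (Finset.mem_filter.mp hv').1
    have hline : ∀ xr : ℝ, ∑ μ ∈ sR, cR μ * σ (μ * xr) = 0 := by
      intro xr
      rw [hfib (fun μ => σ (μ * xr))]
      have hx := hnet o (fun k => xr * u k)
      rw [← hx]
      refine Finset.sum_congr rfl fun v' _ => ?_
      congr 1
      congr 1
      rw [hlam, Finset.sum_mul]
      exact Finset.sum_congr rfl fun k _ => by ring
    have hmom : ∀ n : ℕ, (∑ μ ∈ sR, cR μ * μ ^ n) * iteratedDeriv n σ 0 = 0 :=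
      deriv_moments σ hσ sR cR hline
    have h0' : ∑ μ ∈ sR, cR μ = 0 := by
      have := hmom 0
      simp only [pow_zero, mul_one, iteratedDeriv_zero] at this
      exact (mul_eq_zero.mp this).resolve_right hσ0
    have hSeE : ∀ n ∈ {n : ℕ | Even n ∧ iteratedDeriv n σ 0 ≠ 0}, Even n := fun n hn => hn.1
    have hSoO : ∀ n ∈ {n : ℕ | Odd n ∧ iteratedDeriv n σ 0 ≠ 0}, Odd n := fun n hn => hn.1
    have hcR0 : ∀ μ, cR μ = 0 := by
      apply vanish sR.card sR cR le_rfl hcRsupp _ _ heven hodd hSeE hSoO h0'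
      · intro n hn
        exact (mul_eq_zero.mp (hmom n)).resolve_right hn.2
      · intro n hn
        exact (mul_eq_zero.mp (hmom n)).resolve_right hn.2
    have hfilter : V.filter (fun v' => lam v' = lam v) = {v} := by
      ext v'
      simp only [Finset.mem_filter, Finset.mem_singleton]
      constructor
      · rintro ⟨hv', heqlam⟩
        exact hu hv' hv heqlam
      · rintro rfl
        exact ⟨hv, rfl⟩
    have h3 := hcR0 (lam v)
    rw [show cR (lam v) = ∑ v' ∈ V.filter (fun v' => lam v' = lam v), cc v' o from rfl,
      hfilter, Finset.sum_singleton] at h3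
    have h4 : (∑ i ∈ Finset.univ.filter (fun i => w i = v), a i o)
        - ∑ t ∈ Finset.univ.filter (fun t => wr t = v), ar t o = 0 := h3
    linarith
  -- the grouping
  set E : Finset (Fin din → ℝ) := Finset.image w Finset.univ \ Finset.image wr Finset.univ
    with hE
  have hwE : ∀ i, (¬∃ t, wr t = w i) → w i ∈ E := by
    intro i h
    rw [hE]
    refine Finset.mem_sdiff.mpr ⟨Finset.mem_image_of_mem w (Finset.mem_univ i), ?_⟩
    intro hcon
    obtain ⟨t, _, ht⟩ := Finset.mem_image.mp hcon
    exact h ⟨t, ht⟩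
  set w' : Fin E.card → Fin din → ℝ := fun τ => ((E.equivFin.symm τ : E) : Fin din → ℝ)
    with hw'
  set g : Fin m → Fin rs ⊕ Fin E.card := fun i =>
    if h : ∃ t, wr t = w i then Sum.inl h.choose
    else Sum.inr (E.equivFin ⟨w i, hwE i h⟩) with hg
  have hg1 : ∀ i t, g i = Sum.inl t ↔ wr t = w i := by
    intro i t
    constructor
    · intro h
      by_cases hex : ∃ t', wr t' = w i
      · simp only [hg] at h
        rw [dif_pos hex] at h
        exact (Sum.inl.inj h) ▸ hex.choose_spec
      · simp only [hg] at h
        rw [dif_neg hex] at h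
        exact absurd h (by simp)
    · intro h
      have hex : ∃ t', wr t' = w i := ⟨t, h⟩
      simp only [hg]
      rw [dif_pos hex]
      exact congrArg Sum.inl (hirr_w (hex.choose_spec.trans h.symm))
  have hg2 : ∀ i τ, g i = Sum.inr τ ↔ w i = w' τ := by
    intro i τ
    constructor
    · intro h
      by_cases hex : ∃ t', wr t' = w i
      · simp only [hg] at h
        rw [dif_pos hex] at h
        exact absurd h (by simp)
      · simp only [hg] at h
        rw [dif_neg hex] at h
        have h2 := Sum.inr.inj h
        have h3 : (⟨w i, hwE i hex⟩ : E) = E.equivFin.symm τ := by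
          rw [← h2, Equiv.symm_apply_apply]
        have := congrArg (Subtype.val) h3
        exact this
    · intro h
      have hvE : w' τ ∈ E := (E.equivFin.symm τ).2
      have hnwr : w' τ ∉ Finset.image wr Finset.univ := (Finset.mem_sdiff.mp hvE).2
      have hex : ¬∃ t', wr t' = w i := by
        rintro ⟨t', ht'⟩
        apply hnwr
        rw [← h, ← ht']
        exact Finset.mem_image_of_mem wr (Finset.mem_univ t')
      simp only [hg]
      rw [dif_neg hex]
      congr 1
      have h3 : (⟨w i, hwE i hex⟩ : E) = E.equivFin.symm τ := Subtype.ext h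
      rw [h3, Equiv.apply_symm_apply]
  have hfilr : ∀ t, Finset.univ.filter (fun t' => wr t' = wr t) = {t} := by
    intro t
    ext t'
    simp [hirr_w.eq_iff]
  refine ⟨E.card, w', g, ?_, ?_, ?_, ?_⟩
  · -- every group inl t is hit
    intro t
    obtain ⟨o, ho⟩ : ∃ o, ar t o ≠ 0 := Function.ne_iff.mp (hirr_a t)
    have hne : (Finset.univ.filter (fun i => w i = wr t)).Nonempty := by
      by_contra hcon
      rw [Finset.not_nonempty_iff_eq_empty] at hcon
      have hk := keyo (wr t) (hwrV t) o
      rw [hcon, Finset.sum_empty, hfilr t, Finset.sum_singleton] at hk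
      exact ho hk.symm
    obtain ⟨i, hi⟩ := hne
    exact ⟨i, (hg1 i t).mpr (Finset.mem_filter.mp hi).2.symm⟩
  · -- incoming weights
    intro i
    rcases hgi : g i with t | τ
    · exact ((hg1 i t).mp hgi).symm
    · exact (hg2 i τ).mp hgi
  · -- sums over inl groups
    intro t
    have hfe : Finset.univ.filter (fun i => g i = Sum.inl t)
        = Finset.univ.filter (fun i => w i = wr t) := by
      ext i
      simp only [Finset.mem_filter, Finset.mem_univ, true_and, hg1]
      exact eq_comm
    rw [hfe]
    funext o
    rw [Finset.sum_apply]
    have hk := keyo (wr t) (hwrV t) o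
    rw [hfilr t, Finset.sum_singleton] at hk
    exact hk
  · -- sums over inr groups
    intro τ
    have hvE : w' τ ∈ E := (E.equivFin.symm τ).2
    have hvV : w' τ ∈ V := Finset.mem_union_left _ (Finset.mem_sdiff.mp hvE).1
    have hnwr : w' τ ∉ Finset.image wr Finset.univ := (Finset.mem_sdiff.mp hvE).2
    have hfe : Finset.univ.filter (fun i => g i = Sum.inr τ)
        = Finset.univ.filter (fun i => w i = w' τ) := by
      ext i
      simp only [Finset.mem_filter, Finset.mem_univ, true_and, hg2]
    have hempty : Finset.univ.filter (fun t' => wr t' = w' τ) = ∅ := by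
      ext t'
      simp only [Finset.mem_filter, Finset.mem_univ, true_and, Finset.notMem_empty,
        iff_false]
      intro hcon
      apply hnwr
      rw [← hcon]
      exact Finset.mem_image_of_mem wr (Finset.mem_univ t')
    rw [hfe]
    funext o
    rw [Finset.sum_apply]
    have hk := keyo (w' τ) hvV o
    rw [hempty, Finset.sum_empty] at hk
    simpa using hk
end

section
/- Fix an integer k ≥ 0. Then as m → ∞, G(m − k, m) is asymptotically equivalent to (m^k / (2^k k!)) · m!, i.e. the ratio G(m − k, m) / (m^k m! / (2^k k!)) converges to 1 as m → ∞. -/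
/-!
Write a positive composition of `m = r + k` into `r` parts as `1 + s` with `s` a tuple of
naturals summing to `k`. The `0/1`-tuples `s`, one for each `k`-subset of the `r` parts, each
contribute exactly `m! / 2^k`, so together `r.choose k * m! / 2^k`, and
`r.choose k * k! = r.descFactorial k ~ m^k`. Every other `s` contributes at most `m!`, and there
are only `r.multichoose k - r.choose k` of them; after multiplying by `k!` this is
`r.ascFactorial k - r.descFactorial k = o(m^k)`, since both falling and rising factorials are
squeezed between `(m - 2k)^k` and `m^k`.
-/

/-- `G r m = ∑_{k₁+⋯+k_r = m, kᵢ ≥ 1} m!/(k₁!⋯k_r!)`, the sum of multinomial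
coefficients over all `r`-tuples of positive integers summing to `m`. -/
def G (r m : ℕ) : ℕ :=
  ∑ k ∈ (Finset.Nat.antidiagonalTuple r m).filter (fun k => ∀ i, 0 < k i),
    Nat.multinomial Finset.univ k

open Finset Filter Topology
open scoped Nat

theorem Finset.Nat.card_antidiagonalTuple (r n : ℕ) :
    #(Nat.antidiagonalTuple r n) = r.multichoose n := by
  rw [card_eq_of_equiv_fintype ((Equiv.subtypeEquivRight fun _ => Nat.mem_antidiagonalTuple).trans
    (Sym.equivNatSumOfFintype (Fin r) n).symm), Sym.card_sym_fin_eq_multichoose]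

theorem Nat.multinomial_le_factorial_sum {α : Type*} (s : Finset α) (f : α → ℕ) :
    Nat.multinomial s f ≤ (∑ i ∈ s, f i)! :=
  Nat.le_of_dvd (Nat.factorial_pos _) (Dvd.intro_left _ (Nat.multinomial_spec s f))

@[simps]
def indicatorTuple (ι : Type*) [DecidableEq ι] : Finset ι ↪ (ι → ℕ) where
  toFun S i := if i ∈ S then 1 else 0
  inj' S T h := by
    ext i
    have := congrFun h i
    by_cases hS : i ∈ S <;> by_cases hT : i ∈ T <;> simp_all

section indicatorTuple

variable {ι : Type*} [DecidableEq ι] [Fintype ι]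

theorem sum_indicatorTuple (S : Finset ι) : ∑ i, indicatorTuple ι S i = #S := by
  simp

theorem two_pow_card_mul_multinomial_one_add_indicatorTuple (S : Finset ι) :
    2 ^ #S * Nat.multinomial univ (1 + indicatorTuple ι S) = (Fintype.card ι + #S)! := by
  have hfac : ∀ i, (1 + indicatorTuple ι S i)! = 2 ^ indicatorTuple ι S i := fun i => by
    rw [indicatorTuple_apply]; split <;> rfl
  have := Nat.multinomial_spec univ (1 + indicatorTuple ι S)
  simpa only [Pi.add_apply, Pi.one_apply, hfac, prod_pow_eq_pow_sum, sum_add_distrib,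
    sum_indicatorTuple, sum_const, card_univ, smul_eq_mul, mul_one] using this

end indicatorTuple

theorem map_powersetCard_subset_antidiagonalTuple (r k : ℕ) :
    (powersetCard k univ).map (indicatorTuple (Fin r)) ⊆ Nat.antidiagonalTuple r k := by
  intro s hs
  obtain ⟨S, hS, rfl⟩ := Finset.mem_map.1 hs
  rw [Nat.mem_antidiagonalTuple, sum_indicatorTuple, (mem_powersetCard.1 hS).2]

theorem filter_pos_antidiagonalTuple_add (r k : ℕ) :
    (Nat.antidiagonalTuple r (r + k)).filter (fun t => ∀ i, 0 < t i) =
      (Nat.antidiagonalTuple r k).map (addLeftEmbedding 1) := by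
  ext t
  simp only [mem_filter, Finset.mem_map, Nat.mem_antidiagonalTuple, addLeftEmbedding_apply]
  constructor
  · rintro ⟨hsum, hpos⟩
    refine ⟨t - 1, ?_, ?_⟩
    · rw [Pi.sub_def, sum_tsub_distrib _ fun i _ => hpos i]
      simp [hsum]
    · ext i
      have := hpos i
      simp only [Pi.add_apply, Pi.sub_apply, Pi.one_apply]
      omega
  · rintro ⟨s, hsum, rfl⟩
    refine ⟨?_, fun i => by simp⟩
    simp [sum_add_distrib, hsum]

theorem G_add_eq_sum (r k : ℕ) :
    G r (r + k) = ∑ s ∈ Nat.antidiagonalTuple r k, Nat.multinomial univ (1 + s) := by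
  rw [G, filter_pos_antidiagonalTuple_add, sum_map]
  rfl

def nonIndicatorTuples (r k : ℕ) : Finset (Fin r → ℕ) :=
  Nat.antidiagonalTuple r k \ (powersetCard k univ).map (indicatorTuple (Fin r))

theorem card_nonIndicatorTuples_add_choose (r k : ℕ) :
    #(nonIndicatorTuples r k) + r.choose k = r.multichoose k := by
  rw [← Nat.card_antidiagonalTuple, nonIndicatorTuples,
    ← card_sdiff_add_card_eq_card (map_powersetCard_subset_antidiagonalTuple r k), card_map,
    card_powersetCard, Finset.card_fin]

theorem two_pow_mul_G_add_eq (r k : ℕ) :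
    2 ^ k * G r (r + k) = r.choose k * (r + k)! +
      2 ^ k * ∑ s ∈ nonIndicatorTuples r k, Nat.multinomial univ (1 + s) := by
  rw [G_add_eq_sum, nonIndicatorTuples,
    ← sum_sdiff (map_powersetCard_subset_antidiagonalTuple r k), mul_add, add_comm, sum_map,
    mul_sum]
  congr 1
  calc ∑ S ∈ powersetCard k univ, 2 ^ k * Nat.multinomial univ (1 + indicatorTuple (Fin r) S)
      = ∑ S ∈ powersetCard k (univ : Finset (Fin r)), (r + k)! := sum_congr rfl fun S hS => by
        rw [← (mem_powersetCard.1 hS).2, two_pow_card_mul_multinomial_one_add_indicatorTuple,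
          Fintype.card_fin]
    _ = r.choose k * (r + k)! := by simp

theorem sum_multinomial_nonIndicatorTuples_le (r k : ℕ) :
    ∑ s ∈ nonIndicatorTuples r k, Nat.multinomial univ (1 + s) ≤
      #(nonIndicatorTuples r k) * (r + k)! := by
  rw [← smul_eq_mul, ← sum_const]
  refine sum_le_sum fun s hs => ?_
  have hsum : ∑ i, (1 + s) i = r + k := by
    rw [← Nat.mem_antidiagonalTuple.1 (mem_sdiff.1 hs).1]
    simp only [Pi.add_apply, Pi.one_apply, sum_add_distrib, sum_const, Finset.card_fin,
      smul_eq_mul, mul_one]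
  exact hsum ▸ Nat.multinomial_le_factorial_sum univ (1 + s)

theorem G_ratio_bounds (r k : ℕ) :
    (r.descFactorial k : ℝ) / ((r + k : ℕ) : ℝ) ^ k ≤
        (G r (r + k) : ℝ) / (((r + k : ℕ) : ℝ) ^ k * (r + k)! / (2 ^ k * k !)) ∧
      (G r (r + k) : ℝ) / (((r + k : ℕ) : ℝ) ^ k * (r + k)! / (2 ^ k * k !)) ≤
        (r.descFactorial k : ℝ) / ((r + k : ℕ) : ℝ) ^ k +
          2 ^ k * ((r.ascFactorial k : ℝ) / ((r + k : ℕ) : ℝ) ^ k -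
            (r.descFactorial k : ℝ) / ((r + k : ℕ) : ℝ) ^ k) := by
  set e := ∑ s ∈ nonIndicatorTuples r k, Nat.multinomial univ (1 + s)
  have hG : (2 ^ k * G r (r + k) : ℝ) = r.choose k * (r + k)! + 2 ^ k * e := by
    exact_mod_cast two_pow_mul_G_add_eq r k
  have he : (e : ℝ) ≤ #(nonIndicatorTuples r k) * (r + k)! := by
    exact_mod_cast sum_multinomial_nonIndicatorTuples_le r k
  have hcard : (#(nonIndicatorTuples r k) + r.choose k : ℝ) = r.multichoose k := by
    exact_mod_cast card_nonIndicatorTuples_add_choose r k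
  have hdesc : (r.descFactorial k : ℝ) = k ! * r.choose k := by
    exact_mod_cast Nat.descFactorial_eq_factorial_mul_choose r k
  have hasc : (r.ascFactorial k : ℝ) = k ! * r.multichoose k := by
    rw [Nat.multichoose_eq]
    exact_mod_cast Nat.ascFactorial_eq_factorial_mul_choose' r k
  have hpow : (0 : ℝ) < ((r + k : ℕ) : ℝ) ^ k := by
    rcases Nat.eq_zero_or_pos k with rfl | hk
    · simp
    · positivity
  have hfac : (0 : ℝ) < (r + k)! := by positivity
  have hratio : (G r (r + k) : ℝ) / (((r + k : ℕ) : ℝ) ^ k * (r + k)! / (2 ^ k * k !)) =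
      (r.descFactorial k : ℝ) / ((r + k : ℕ) : ℝ) ^ k +
        2 ^ k * (k ! * e / (r + k)!) / ((r + k : ℕ) : ℝ) ^ k := by
    rw [hdesc]
    field_simp
    linear_combination hG
  have hexcess : k ! * (e : ℝ) / (r + k)! ≤ r.ascFactorial k - r.descFactorial k := by
    rw [div_le_iff₀ hfac, hasc, hdesc, ← hcard]
    linarith [mul_le_mul_of_nonneg_left he (Nat.cast_nonneg (k !) : (0 : ℝ) ≤ k !)]
  rw [hratio, ← sub_div]
  constructor
  · have : 0 ≤ 2 ^ k * (k ! * (e : ℝ) / (r + k)!) / ((r + k : ℕ) : ℝ) ^ k := by positivity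
    linarith
  · rw [mul_div_assoc]
    gcongr

theorem tendsto_natCast_sub_div_atTop (c : ℕ) :
    Tendsto (fun m : ℕ => ((m - c : ℕ) : ℝ) / m) atTop (𝓝 1) := by
  refine ((tendsto_natCast_div_add_atTop (c : ℝ)).comp (tendsto_sub_atTop_nat c)).congr' ?_
  filter_upwards [eventually_ge_atTop c] with m hm
  simp [Nat.cast_sub hm]

theorem tendsto_div_pow_of_sub_pow_le_of_le_pow {f : ℕ → ℕ} (c k : ℕ)
    (hlow : ∀ᶠ m in atTop, (m - c) ^ k ≤ f m) (hup : ∀ᶠ m in atTop, f m ≤ m ^ k) :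
    Tendsto (fun m => (f m : ℝ) / m ^ k) atTop (𝓝 1) := by
  have hlim : Tendsto (fun m : ℕ => (((m - c : ℕ) : ℝ) / m) ^ k) atTop (𝓝 1) := by
    simpa using (tendsto_natCast_sub_div_atTop c).pow k
  refine tendsto_of_tendsto_of_tendsto_of_le_of_le' hlim tendsto_const_nhds ?_ ?_
  · filter_upwards [hlow] with m hm
    rw [div_pow]
    gcongr
    exact_mod_cast hm
  · filter_upwards [hup, eventually_gt_atTop 0] with m hm hm0
    rw [div_le_one (by positivity)]
    exact_mod_cast hm

theorem tendsto_descFactorial_sub_div_pow (k : ℕ) :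
    Tendsto (fun m : ℕ => ((m - k).descFactorial k : ℝ) / m ^ k) atTop (𝓝 1) := by
  refine tendsto_div_pow_of_sub_pow_le_of_le_pow (2 * k) k (.of_forall fun m => ?_)
    (.of_forall fun m => ?_)
  · calc (m - 2 * k) ^ k ≤ (m - k + 1 - k) ^ k := Nat.pow_le_pow_left (by omega) k
      _ ≤ _ := Nat.pow_sub_le_descFactorial _ _
  · exact (Nat.descFactorial_le_pow _ _).trans (Nat.pow_le_pow_left (by omega) k)

theorem tendsto_ascFactorial_sub_div_pow (k : ℕ) :
    Tendsto (fun m : ℕ => ((m - k).ascFactorial k : ℝ) / m ^ k) atTop (𝓝 1) := by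
  refine tendsto_div_pow_of_sub_pow_le_of_le_pow k k
    (.of_forall fun m => Nat.pow_succ_le_ascFactorial _ _) ?_
  filter_upwards [eventually_gt_atTop k] with m hm
  obtain ⟨n, hn⟩ : ∃ n, m - k = n + 1 := ⟨m - k - 1, by omega⟩
  rw [hn]
  exact (Nat.ascFactorial_le_pow_add n k).trans (Nat.pow_le_pow_left (by omega) k)

/-- For fixed `k ≥ 0`, `G(m−k, m) ∼ (m^k / (2^k k!)) · m!` as
`m → ∞`: the ratio of the two quantities tends to `1`. -/
theorem G_asymptotic (k : ℕ) :
    Filter.Tendsto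
      (fun m : ℕ => (G (m - k) m : ℝ) /
        ((m : ℝ) ^ k * (Nat.factorial m : ℝ) / (2 ^ k * (Nat.factorial k : ℝ))))
      Filter.atTop (nhds 1) := by
  have hdesc := tendsto_descFactorial_sub_div_pow k
  have hupper : Tendsto (fun m : ℕ => ((m - k).descFactorial k : ℝ) / m ^ k +
      2 ^ k * (((m - k).ascFactorial k : ℝ) / m ^ k - ((m - k).descFactorial k : ℝ) / m ^ k))
      atTop (𝓝 1) := by
    simpa using hdesc.add (((tendsto_ascFactorial_sub_div_pow k).sub hdesc).const_mul (2 ^ k))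
  refine tendsto_of_tendsto_of_tendsto_of_le_of_le' hdesc hupper ?_ ?_ <;>
    filter_upwards [eventually_ge_atTop k] with m hm <;>
    obtain ⟨r, rfl⟩ := Nat.exists_eq_add_of_le' hm <;>
    rw [Nat.add_sub_cancel]
  exacts [(G_ratio_bounds r k).1, (G_ratio_bounds r k).2]
end

section
/- Fix an integer k ≥ 0. Then as m → ∞, T(m − k, m) is asymptotically equivalent to G(m − k, m), and hence to (m^k / (2^k k!)) · m!; in particular the ratio T(m − k, m) / G(m − k, m) converges to 1 as m → ∞. -/
/-- `T r m`, the number of affine subspaces of the expansion manifold: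
`T(r,m) = ∑_{j=0}^{m−r} ∑_s m!/(k₁!⋯k_r! b₁!⋯b_j!) · 1/(c₁!⋯c_{m−r}!)`, summing over
all `(r+j)`-tuples `s = (k₁,…,k_r,b₁,…,b_j)` of positive integers with total sum `m`,
where `cᵢ` is the number of occurrences of `i` among `(b₁,…,b_j)`. The tuple `s` is
encoded as `s : Fin (r+j) → ℕ`, whose last `j` entries are the `b`'s. -/
def T (r m : ℕ) : ℚ :=
  ∑ j ∈ Finset.range (m - r + 1),
    ∑ s ∈ (Finset.Nat.antidiagonalTuple (r + j) m).filter (fun s => ∀ i, 0 < s i),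
      (Nat.multinomial Finset.univ s : ℚ) /
        ∏ i ∈ Finset.Icc 1 (m - r),
          (Nat.factorial
            ((Finset.univ.filter fun t : Fin j => s (Fin.natAdd r t) = i).card) : ℚ)

/-!
Write `m = n + k`. The `j = 0` summand of `T(n, n + k)` is `G(n, n + k)`, and each of the other
`k` summands runs over at most `(n + k)^(k-1)` tuples of weight at most `(n + k)!`, so
`0 ≤ T - G ≤ k (n + k)^(k-1) (n + k)!`. In `G(n, n + k)`, a composition all of whose parts are
`≤ 2` has exactly `k` parts equal to `2`: there are `choose n k` of them, each of weight
`(n + k)! / 2^k`, and the remaining compositions obey the same bound as above. Since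
`choose n k ~ n^k / k!`, the error `k (n + k)^(k-1) (n + k)!` is negligible against the main term
`(n + k)^k (n + k)! / (2^k k!)`, to which both `G` and `T` are therefore equivalent.
-/

open Finset
open scoped Nat

def posTuples (n M : ℕ) : Finset (Fin n → ℕ) :=
  (Nat.antidiagonalTuple n M).filter fun s => ∀ i, 0 < s i

lemma mem_posTuples {n M : ℕ} {s : Fin n → ℕ} :
    s ∈ posTuples n M ↔ ∑ i, s i = M ∧ ∀ i, 0 < s i := by
  simp [posTuples, Nat.mem_antidiagonalTuple]

lemma sum_sub_one_of_mem_posTuples {n M : ℕ} {s : Fin n → ℕ} (hs : s ∈ posTuples n M) :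
    ∑ i, (s i - 1) = M - n := by
  obtain ⟨hsum, hpos⟩ := mem_posTuples.mp hs
  rw [sum_tsub_distrib _ fun i _ => hpos i, hsum]
  simp

lemma posTuples_add_eq_map (n d : ℕ) :
    posTuples n (n + d) = (Nat.antidiagonalTuple n d).map ⟨(· + 1), add_left_injective 1⟩ := by
  ext s
  simp only [Finset.mem_map, Nat.mem_antidiagonalTuple, Function.Embedding.coeFn_mk]
  constructor
  · intro hs
    refine ⟨s - 1, ?_, ?_⟩
    · simpa using sum_sub_one_of_mem_posTuples hs
    · funext i
      simpa using Nat.sub_add_cancel ((mem_posTuples.mp hs).2 i)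
  · rintro ⟨t, ht, rfl⟩
    refine mem_posTuples.mpr ⟨?_, fun i => Nat.succ_pos _⟩
    simp [sum_add_distrib, ht, add_comm]

lemma Finset.Nat.card_antidiagonalTuple_s17 (n d : ℕ) :
    #(Nat.antidiagonalTuple n d) = n.multichoose d := by
  rw [← Fintype.card_fin n, ← Sym.card_sym_eq_multichoose, Fintype.card_fin]
  exact card_eq_of_equiv_fintype <|
    (Equiv.subtypeEquivRight fun _ => Nat.mem_antidiagonalTuple).trans
      (Sym.equivNatSumOfFintype (Fin n) d).symm

lemma card_posTuples_add (n d : ℕ) : #(posTuples n (n + d)) = n.multichoose d := by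
  rw [posTuples_add_eq_map, card_map, Nat.card_antidiagonalTuple_s17]

lemma card_posTuples_le {n M : ℕ} (h : n ≤ M) : #(posTuples n M) ≤ M ^ (M - n) := by
  obtain ⟨d, rfl⟩ := Nat.exists_eq_add_of_le h
  rw [card_posTuples_add, Nat.multichoose_eq, Nat.add_sub_cancel_left]
  exact (Nat.choose_le_pow _ _).trans (Nat.pow_le_pow_left (by omega) d)

lemma multinomial_le_factorial {n M : ℕ} {s : Fin n → ℕ} (hs : s ∈ posTuples n M) :
    Nat.multinomial univ s ≤ M ! :=
  (mem_posTuples.mp hs).1 ▸ Nat.div_le_self _ _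

lemma cast_multinomial_eq_div {K : Type*} [Field K] [CharZero K] {n : ℕ} (s : Fin n → ℕ) :
    (Nat.multinomial univ s : K) = (∑ i, s i)! / ∏ i, ((s i)! : K) := by
  have hprod : ∏ i, ((s i)! : K) ≠ 0 :=
    prod_ne_zero_iff.mpr fun i _ => Nat.cast_ne_zero.mpr (Nat.factorial_ne_zero _)
  rw [eq_div_iff hprod, ← Nat.cast_prod, ← Nat.cast_mul, mul_comm, Nat.multinomial_spec]

lemma G_eq_sum (r m : ℕ) : G r m = ∑ s ∈ posTuples r m, Nat.multinomial univ s := rfl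

def tSummand (r m j : ℕ) : ℚ :=
  ∑ s ∈ posTuples (r + j) m, (Nat.multinomial univ s : ℚ) /
    ∏ i ∈ Icc 1 (m - r), ((#{t : Fin j | s (Fin.natAdd r t) = i})! : ℚ)

lemma T_eq_sum_tSummand (r m : ℕ) : T r m = ∑ j ∈ range (m - r + 1), tSummand r m j := rfl

lemma tSummand_zero (r m : ℕ) : tSummand r m 0 = G r m := by
  simp [tSummand, G_eq_sum]

lemma tSummand_nonneg (r m j : ℕ) : 0 ≤ tSummand r m j :=
  sum_nonneg fun _ _ => by positivity

lemma tSummand_le (r m j : ℕ) : tSummand r m j ≤ #(posTuples (r + j) m) * m ! := by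
  rw [← nsmul_eq_mul]
  refine sum_le_card_nsmul _ _ _ fun s hs => ?_
  have hprod :
      (1 : ℚ) ≤ ∏ i ∈ Icc 1 (m - r), ((#{t : Fin j | s (Fin.natAdd r t) = i})! : ℚ) := by
    exact_mod_cast prod_pos fun i _ => Nat.factorial_pos _
  exact (div_le_self (by positivity) hprod).trans (by exact_mod_cast multinomial_le_factorial hs)

lemma G_le_T (r m : ℕ) : (G r m : ℚ) ≤ T r m := by
  rw [T_eq_sum_tSummand, ← tSummand_zero]
  exact single_le_sum (fun j _ => tSummand_nonneg r m j) (by simp)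

lemma T_le_G_add (n k : ℕ) : T n (n + k) ≤ G n (n + k) + k * (n + k) ^ (k - 1) * (n + k)! := by
  rw [T_eq_sum_tSummand, Nat.add_sub_cancel_left, sum_range_succ', tSummand_zero, add_comm]
  gcongr
  calc ∑ j ∈ range k, tSummand n (n + k) (j + 1)
      ≤ ∑ _j ∈ range k, ((n + k) ^ (k - 1) * (n + k)! : ℚ) := by
        refine sum_le_sum fun j hj => (tSummand_le _ _ _).trans ?_
        have hj := mem_range.mp hj
        have hcard : #(posTuples (n + (j + 1)) (n + k)) ≤ (n + k) ^ (k - 1) :=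
          (card_posTuples_le (by omega)).trans (Nat.pow_le_pow_right (by omega) (by omega))
        gcongr
        exact_mod_cast hcard
    _ = k * (n + k) ^ (k - 1) * (n + k)! := by simp [mul_assoc]

lemma prod_factorial_eq_two_pow {n k : ℕ} {s : Fin n → ℕ} (hs : s ∈ posTuples n (n + k))
    (hle : ∀ i, s i ≤ 2) : ∏ i, (s i)! = 2 ^ k := by
  have hfac : ∀ i, (s i)! = 2 ^ (s i - 1) := fun i => by
    obtain h | h : s i = 1 ∨ s i = 2 := by have := (mem_posTuples.mp hs).2 i; have := hle i; omega
    all_goals rw [h]; rfl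
  simp only [hfac, prod_pow_eq_pow_sum, sum_sub_one_of_mem_posTuples hs, Nat.add_sub_cancel_left]

lemma card_filter_le_two (n k : ℕ) :
    #{s ∈ posTuples n (n + k) | ∀ i, s i ≤ 2} = n.choose k := by
  rw [show n.choose k = #(powersetCard k (univ : Finset (Fin n))) by simp]
  refine card_nbij' (fun s => ({i | s i = 2} : Finset (Fin n)))
    (fun A i => if i ∈ A then 2 else 1) ?_ ?_ ?_ ?_
  · intro s hs
    obtain ⟨hs, hle⟩ := mem_filter.mp hs
    refine mem_powersetCard.mpr ⟨subset_univ _, ?_⟩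
    rw [card_filter, ← Nat.add_sub_cancel_left (n := n) (m := k),
      ← sum_sub_one_of_mem_posTuples hs]
    refine sum_congr rfl fun i _ => ?_
    have := (mem_posTuples.mp hs).2 i
    have := hle i
    split_ifs <;> omega
  · intro A hA
    replace hA : #A = k := (mem_powersetCard.mp hA).2
    simp only [coe_filter, Set.mem_ofPred_eq, mem_posTuples]
    refine ⟨⟨?_, fun i => by split_ifs <;> omega⟩, fun i => by split_ifs <;> omega⟩
    calc ∑ i, (if i ∈ A then 2 else 1) = ∑ i, (1 + if i ∈ A then 1 else 0) :=
          sum_congr rfl fun i _ => by split_ifs <;> rfl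
      _ = n + k := by simp [sum_add_distrib, hA]
  · intro s hs
    obtain ⟨hs, hle⟩ := mem_filter.mp hs
    funext i
    have := (mem_posTuples.mp hs).2 i
    have := hle i
    simp only [mem_filter, mem_univ, true_and]
    split_ifs <;> omega
  · intro A _
    ext i
    simp

lemma card_filter_not_le_two_le_mul_card (n M : ℕ) :
    #{s ∈ posTuples n M | ¬∀ i, s i ≤ 2} ≤ n * #(posTuples n (M - 2)) := by
  rw [show n * #(posTuples n (M - 2)) = #((univ : Finset (Fin n)) ×ˢ posTuples n (M - 2)) by
    simp]
  refine card_le_card_of_surjOn (fun p => p.2 + Pi.single p.1 2) fun s hs => ?_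
  obtain ⟨hs, hbad⟩ := mem_filter.mp hs
  obtain ⟨hsum, hpos⟩ := mem_posTuples.mp hs
  push Not at hbad
  obtain ⟨i, hi⟩ := hbad
  have hsingle : Pi.single i 2 ≤ s := fun j => by
    rcases eq_or_ne j i with rfl | hj <;> simp [*, hi.le]
  refine ⟨(i, s - Pi.single i 2), ?_, tsub_add_cancel_of_le hsingle⟩
  simp only [coe_product, coe_univ, Set.mem_prod, Set.mem_univ, true_and, mem_coe,
    mem_posTuples, Pi.sub_apply]
  refine ⟨?_, fun j => ?_⟩
  · rw [sum_tsub_distrib _ fun j _ => hsingle j, hsum, sum_pi_single']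
    simp
  · rcases eq_or_ne j i with rfl | hj
    · simp only [Pi.single_eq_same]; omega
    · simp [hj, hpos j]

lemma card_filter_not_le_two_le (n k : ℕ) :
    #{s ∈ posTuples n (n + k) | ¬∀ i, s i ≤ 2} ≤ k * (n + k) ^ (k - 1) := by
  rcases lt_or_ge k 2 with hk | hk
  · have hempty : {s ∈ posTuples n (n + k) | ¬∀ i, s i ≤ 2} = ∅ :=
      filter_eq_empty_iff.mpr fun s hs hbad => by
        push Not at hbad
        obtain ⟨i, hi⟩ := hbad
        have := single_le_sum (fun j _ => Nat.zero_le (s j - 1)) (mem_univ i)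
        rw [sum_sub_one_of_mem_posTuples hs] at this
        omega
    rw [hempty, card_empty]
    exact Nat.zero_le _
  · calc #{s ∈ posTuples n (n + k) | ¬∀ i, s i ≤ 2}
        ≤ n * #(posTuples n (n + k - 2)) := card_filter_not_le_two_le_mul_card n (n + k)
      _ ≤ n * (n + k - 2) ^ (k - 2) := by
        gcongr
        simpa [show n + k - 2 - n = k - 2 by omega] using
          card_posTuples_le (n := n) (M := n + k - 2) (by omega)
      _ ≤ (n + k) * (n + k) ^ (k - 2) := by gcongr <;> omega
      _ = (n + k) ^ (k - 1) := by rw [← pow_succ']; congr 1; omega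
      _ ≤ k * (n + k) ^ (k - 1) := Nat.le_mul_of_pos_left _ (by omega)

lemma sum_multinomial_filter_not_le_two_le (n k : ℕ) :
    ∑ s ∈ posTuples n (n + k) with ¬∀ i, s i ≤ 2, Nat.multinomial univ s
      ≤ k * (n + k) ^ (k - 1) * (n + k)! :=
  calc _ ≤ #{s ∈ posTuples n (n + k) | ¬∀ i, s i ≤ 2} * (n + k)! :=
        sum_le_card_nsmul _ _ _ fun _ hs => multinomial_le_factorial (mem_filter.mp hs).1
    _ ≤ _ := Nat.mul_le_mul_right _ (card_filter_not_le_two_le n k)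

lemma G_eq_choose_mul_add {K : Type*} [Field K] [CharZero K] (n k : ℕ) :
    (G n (n + k) : K) = n.choose k * ((n + k)! / 2 ^ k) +
      ∑ s ∈ posTuples n (n + k) with ¬∀ i, s i ≤ 2, (Nat.multinomial univ s : K) := by
  rw [G_eq_sum, Nat.cast_sum, ← sum_filter_add_sum_filter_not _ fun s => ∀ i, s i ≤ 2]
  congr 1
  rw [← card_filter_le_two, ← nsmul_eq_mul, ← sum_const]
  refine sum_congr rfl fun s hs => ?_
  obtain ⟨hs, hle⟩ := mem_filter.mp hs
  rw [cast_multinomial_eq_div, (mem_posTuples.mp hs).1]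
  congr 1
  exact_mod_cast prod_factorial_eq_two_pow hs hle

lemma abs_T_sub_G_le (n k : ℕ) :
    |(T n (n + k) : ℝ) - G n (n + k)| ≤ k * (n + k) ^ (k - 1) * (n + k)! := by
  have hlow : (G n (n + k) : ℝ) ≤ T n (n + k) := by exact_mod_cast G_le_T n (n + k)
  have hhigh : (T n (n + k) : ℝ) ≤ G n (n + k) + k * (n + k) ^ (k - 1) * (n + k)! := by
    exact_mod_cast T_le_G_add n k
  rw [abs_of_nonneg (sub_nonneg.mpr hlow)]
  linarith

lemma abs_G_sub_choose_mul_le (n k : ℕ) :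
    |(G n (n + k) : ℝ) - n.choose k * ((n + k)! / 2 ^ k)| ≤
      k * (n + k) ^ (k - 1) * (n + k)! := by
  have hG : (G n (n + k) : ℝ) = n.choose k * ((n + k)! / 2 ^ k) +
      ∑ s ∈ posTuples n (n + k) with ¬∀ i, s i ≤ 2, (Nat.multinomial univ s : ℝ) := by
    exact_mod_cast G_eq_choose_mul_add (K := ℝ) n k
  have hbad : ∑ s ∈ posTuples n (n + k) with ¬∀ i, s i ≤ 2, (Nat.multinomial univ s : ℝ)
      ≤ k * (n + k) ^ (k - 1) * (n + k)! := by
    exact_mod_cast sum_multinomial_filter_not_le_two_le n k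
  rw [hG, add_sub_cancel_left, abs_of_nonneg (by positivity)]
  exact hbad

open Filter Asymptotics

lemma isEquivalent_of_abs_sub_le {α : Type*} {l : Filter α} {u v w d : α → ℝ}
    (hv : v ~[l] d) (hw : w =o[l] d) (h : ∀ᶠ x in l, |u x - v x| ≤ w x) : u ~[l] d := by
  have hsub : (u - v) =o[l] d :=
    (IsBigO.of_bound 1 (h.mono fun x hx => by
      simpa [Real.norm_eq_abs] using hx.trans (le_abs_self _))).trans_isLittleO hw
  simpa using hv.add_isLittleO hsub

lemma isEquivalent_natCast_add (k : ℕ) :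
    (fun n : ℕ => (n : ℝ)) ~[atTop] fun n => (n : ℝ) + k := by
  have hconst : (fun _ : ℕ => -(k : ℝ)) =o[atTop] fun n => (n : ℝ) + k :=
    isLittleO_const_left.mpr <| Or.inr <| tendsto_norm_atTop_atTop.comp <|
      tendsto_atTop_add_const_right _ _ tendsto_natCast_atTop_atTop
  exact (hconst.congr_left fun n => by rw [Pi.sub_apply]; ring).isEquivalent

lemma isEquivalent_choose_mul_factorial (k : ℕ) :
    (fun n : ℕ => (n.choose k : ℝ) * ((n + k)! / 2 ^ k)) ~[atTop]
      fun n => ((n : ℝ) + k) ^ k * (n + k)! / (2 ^ k * k !) := by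
  have hchoose := (isEquivalent_choose k).trans
    (((isEquivalent_natCast_add k).pow k).div (IsEquivalent.refl (u := fun _ => (k ! : ℝ))))
  refine (hchoose.mul (IsEquivalent.refl (u := fun n : ℕ => ((n + k)! / 2 ^ k : ℝ))))
    |>.congr_right (.of_forall fun n => ?_)
  simp only [Pi.mul_apply, Pi.div_apply, Pi.pow_apply]
  ring

lemma isLittleO_pow_pred_mul_factorial (k : ℕ) :
    (fun n : ℕ => (k : ℝ) * ((n : ℝ) + k) ^ (k - 1) * (n + k)!) =o[atTop]
      fun n => ((n : ℝ) + k) ^ k * (n + k)! / (2 ^ k * k !) := by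
  rcases Nat.eq_zero_or_pos k with rfl | hk
  · simp
  have hpow : (fun n : ℕ => ((n : ℝ) + k) ^ (k - 1)) =o[atTop] fun n => ((n : ℝ) + k) ^ k :=
    (isLittleO_pow_pow_atTop_of_lt (Nat.sub_lt hk one_pos)).comp_tendsto
      (tendsto_atTop_add_const_right _ _ tendsto_natCast_atTop_atTop)
  have hfac := isBigO_refl (fun n : ℕ => ((n + k)! : ℝ)) atTop
  refine ((hpow.const_mul_left (k : ℝ)).mul_isBigO hfac
    |>.const_mul_right (c := (2 ^ k * k ! : ℝ)⁻¹) (by positivity)).congr'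
    (.of_forall fun n => rfl) (.of_forall fun n => by ring)

/-- For fixed `k ≥ 0`, `T(m−k, m) ∼ G(m−k, m)` as `m → ∞`
(the ratio `T/G` tends to `1`), and hence also `T(m−k, m) ∼ (m^k / (2^k k!)) · m!`. -/
theorem T_asymptotic (k : ℕ) :
    Filter.Tendsto
      (fun m : ℕ => ((T (m - k) m : ℚ) : ℝ) / (G (m - k) m : ℝ))
      Filter.atTop (nhds 1) ∧
    Filter.Tendsto
      (fun m : ℕ => ((T (m - k) m : ℚ) : ℝ) /
        ((m : ℝ) ^ k * (Nat.factorial m : ℝ) / (2 ^ k * (Nat.factorial k : ℝ))))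
      Filter.atTop (nhds 1) := by
  have hE := isLittleO_pow_pred_mul_factorial k
  have hG : (fun n : ℕ => (G n (n + k) : ℝ)) ~[atTop]
      fun n => ((n : ℝ) + k) ^ k * (n + k)! / (2 ^ k * k !) :=
    isEquivalent_of_abs_sub_le (isEquivalent_choose_mul_factorial k) hE
      (.of_forall fun n => abs_G_sub_choose_mul_le n k)
  have hT : (fun n : ℕ => (T n (n + k) : ℝ)) ~[atTop]
      fun n => ((n : ℝ) + k) ^ k * (n + k)! / (2 ^ k * k !) :=
    isEquivalent_of_abs_sub_le hG hE (.of_forall fun n => abs_T_sub_G_le n k)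
  have hD : ∀ᶠ n : ℕ in atTop, 0 < ((n : ℝ) + k) ^ k * (n + k)! / (2 ^ k * k !) :=
    (eventually_gt_atTop 0).mono fun n hn => by positivity
  have hGne : ∀ᶠ n : ℕ in atTop, (G n (n + k) : ℝ) ≠ 0 :=
    (hG.eventually_pos hD).mono fun _ h => h.ne'
  refine ⟨(tendsto_add_atTop_iff_nat k).mp ?_, (tendsto_add_atTop_iff_nat k).mp ?_⟩
  · simp only [Nat.add_sub_cancel]
    exact (isEquivalent_iff_tendsto_one hGne).mp (hT.trans hG.symm)
  · simp only [Nat.add_sub_cancel, Nat.cast_add]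
    exact (isEquivalent_iff_tendsto_one (hD.mono fun _ h => h.ne')).mp hT
end
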